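/- arXiv:2504.20408 — 3 statements merged into one kernel-verified Lean document; each statement's English description precedes it below -/
import Mathlib

section
/- Let d ≥ 1 and let G : ℤ^d × ℤ^d → ℂ satisfy G(l,m) → 0 as max(‖l‖_∞, ‖m‖_∞) → ∞ (i.e., for every ε > 0 there is K such that |G(l,m)| < ε whenever ‖l‖_∞ > K or ‖m‖_∞ > K). Then for every ε > 0 there exist M ∈ ℕ and finitely supported functions α_t, β_t, γ_t : ℤ^d → ℂ (1 ≤ t ≤ M) such that, setting G^fast(l,m) := Σ_{t=1}^{M} γ_t(l+m) α_t(l) β_t(m), for every a : ℤ^d → ℂ with Σ_{n∈ℤ^d} |a_n| < ∞ one has (Σ_{k∈ℤ^d} | Σ_{l+m=k} ((G(l,m) − G(m,m)) − (G^fast(l,m) − G^fast(m,m))) a_l a_m |²)^{1/2} ≤ ε (Σ_{n∈ℤ^d} |a_n|)². -/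
set_option maxHeartbeats 1600000 in
/-- (Lemma 3.2 of the paper, Fourier-coefficient form.)
If the kernel modes `G(l,m)` tend to `0` as `max(‖l‖_∞, ‖m‖_∞) → ∞`, then for every
`ε > 0` there are `M ∈ ℕ` and finitely supported `α_t, β_t, γ_t : ℤ^d → ℂ`
(`1 ≤ t ≤ M`) such that, with `G^fast(l,m) := Σ_t γ_t(l+m) α_t(l) β_t(m)`, for every
absolutely summable `a : ℤ^d → ℂ` one has
`(Σ_k |Σ_{l+m=k} ((G(l,m) − G(m,m)) − (G^fast(l,m) − G^fast(m,m))) a_l a_m|²)^{1/2}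
  ≤ ε (Σ_n |a_n|)²`. -/
theorem statement0 (d : ℕ) (hd : 1 ≤ d)
    (G : (Fin d → ℤ) → (Fin d → ℤ) → ℂ)
    (hG : ∀ ε > (0 : ℝ), ∃ K : ℝ, ∀ l m : Fin d → ℤ,
      (‖l‖ > K ∨ ‖m‖ > K) → ‖G l m‖ < ε) :
    ∀ ε > (0 : ℝ), ∃ (M : ℕ) (α β γ : Fin M → (Fin d → ℤ) → ℂ),
      (∀ t, (Function.support (α t)).Finite) ∧
      (∀ t, (Function.support (β t)).Finite) ∧
      (∀ t, (Function.support (γ t)).Finite) ∧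
      ∀ a : (Fin d → ℤ) → ℂ, Summable (fun n => ‖a n‖) →
        Real.sqrt (∑' k : Fin d → ℤ, ‖∑' l : Fin d → ℤ,
            ((G l (k - l) - G (k - l) (k - l)) -
              ((∑ t, γ t (l + (k - l)) * α t l * β t (k - l)) -
                (∑ t, γ t ((k - l) + (k - l)) * α t (k - l) * β t (k - l))))
              * a l * a (k - l)‖ ^ 2)
          ≤ ε * (∑' n : Fin d → ℤ, ‖a n‖) ^ 2 := by
  classical
  intro ε hε
  obtain ⟨K, hK⟩ := hG (ε / 2) (by positivity)
  have hball : ({x : Fin d → ℤ | ‖x‖ ≤ K}).Finite := by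
    have : {x : Fin d → ℤ | ‖x‖ ≤ K} ⊆ Metric.closedBall 0 K := by
      intro x hx; simpa [Metric.mem_closedBall, dist_zero_right] using hx
    exact ((isCompact_closedBall (0 : Fin d → ℤ) K).finite_of_discrete).subset this
  set B : Finset (Fin d → ℤ) := hball.toFinset with hB
  set S : Finset ((Fin d → ℤ) × (Fin d → ℤ)) := B ×ˢ B with hS
  set M := S.card with hM
  set e := S.equivFin with he
  set p : Fin M → (Fin d → ℤ) × (Fin d → ℤ) := fun t => (e.symm t : _) with hp
  have hp_inj : Function.Injective p := fun s t hst => by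
    have := Subtype.coe_injective hst
    exact e.symm.injective this
  have hp_mem : ∀ t, p t ∈ S := fun t => (e.symm t).2
  set A : Fin M → (Fin d → ℤ) → ℂ := fun t l => if l = (p t).1 then 1 else 0 with hA
  set Bf : Fin M → (Fin d → ℤ) → ℂ := fun t m => if m = (p t).2 then 1 else 0 with hBf
  set Γ : Fin M → (Fin d → ℤ) → ℂ :=
    fun t k => if k = (p t).1 + (p t).2 then G (p t).1 (p t).2 else 0 with hΓ
  refine ⟨M, A, Bf, Γ, ?_, ?_, ?_, ?_⟩
  · intro t
    refine Set.Finite.subset (Set.finite_singleton (p t).1) ?_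
    intro x hx
    by_contra h
    exact hx (by simp [Set.mem_singleton_iff] at h; simp [hA, h])
  · intro t
    refine Set.Finite.subset (Set.finite_singleton (p t).2) ?_
    intro x hx
    by_contra h
    exact hx (by simp [Set.mem_singleton_iff] at h; simp [hBf, h])
  · intro t
    refine Set.Finite.subset (Set.finite_singleton ((p t).1 + (p t).2)) ?_
    intro x hx
    by_contra h
    exact hx (by simp [Set.mem_singleton_iff] at h; simp [hΓ, h])
  -- key identity
  have key : ∀ l m : Fin d → ℤ,
      (∑ t, Γ t (l + m) * A t l * Bf t m)
      = if (l, m) ∈ S then G l m else 0 := by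
    intro l m
    simp only [hA, hBf, hΓ]
    have hterm : ∀ t, (if l + m = (p t).1 + (p t).2 then G (p t).1 (p t).2 else 0)
        * (if l = (p t).1 then 1 else 0) * (if m = (p t).2 then 1 else 0)
        = if p t = (l, m) then G l m else 0 := by
      intro t
      by_cases h1 : l = (p t).1
      · by_cases h2 : m = (p t).2
        · subst h1; subst h2; simp
        · rw [if_neg (fun (h : p t = (l,m)) => h2 (by rw [h]))]
          simp [h2]
      · rw [if_neg (fun (h : p t = (l,m)) => h1 (by rw [h]))]
        simp [h1]
    rw [Finset.sum_congr rfl (fun t _ => hterm t)]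
    by_cases hx : (l, m) ∈ S
    · set t₀ := e ⟨(l, m), hx⟩ with ht₀
      have hpt₀ : p t₀ = (l, m) := by simp [hp, ht₀]
      have : ∀ t, (p t = (l, m)) ↔ t = t₀ := fun t =>
        ⟨fun h => hp_inj (by rw [h, hpt₀]), fun h => by rw [h, hpt₀]⟩
      simp only [this]
      simp [hx]
    · have : ∀ t, ¬(p t = (l, m)) := fun t h => hx (h ▸ hp_mem t)
      simp [this, hx]
  intro a ha
  set T := ∑' n, ‖a n‖ with hT
  have hT0 : 0 ≤ T := tsum_nonneg fun n => norm_nonneg _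
  set E : (Fin d → ℤ) → (Fin d → ℤ) → ℂ :=
    fun l m => G l m - (if (l, m) ∈ S then G l m else 0) with hEdef
  have hE_bound : ∀ l m, ‖E l m‖ ≤ ε / 2 := by
    intro l m
    by_cases hx : (l, m) ∈ S
    · simp only [hEdef, hx, if_true, sub_self, norm_zero]; positivity
    · simp only [hEdef, hx, if_false, sub_zero]
      refine le_of_lt (hK l m ?_)
      rw [hS, Finset.mem_product] at hx
      rcases not_and_or.1 hx with h | h
      · left
        rw [hB, Set.Finite.mem_toFinset] at h
        exact lt_of_not_ge h
      · right
        rw [hB, Set.Finite.mem_toFinset] at h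
        exact lt_of_not_ge h
  -- pointwise rewriting of the summand
  have hpt : ∀ k l : Fin d → ℤ,
      ((G l (k - l) - G (k - l) (k - l)) -
        ((∑ t, Γ t (l + (k - l)) * A t l * Bf t (k - l)) -
          (∑ t, Γ t ((k - l) + (k - l)) * A t (k - l) * Bf t (k - l))))
        * a l * a (k - l)
      = (E l (k - l) - E (k - l) (k - l)) * a l * a (k - l) := by
    intro k l
    rw [key l (k - l), key (k - l) (k - l)]
    simp only [hEdef]
    ring
  -- summability machinery
  have hg2 : Summable (fun z : (Fin d → ℤ) × (Fin d → ℤ) => ‖a z.1‖ * ‖a z.2‖) :=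
    ha.mul_of_nonneg ha (fun n => norm_nonneg _) (fun n => norm_nonneg _)
  let φ : ((Fin d → ℤ) × (Fin d → ℤ)) ≃ ((Fin d → ℤ) × (Fin d → ℤ)) :=
    { toFun := fun z => (z.2, z.1 - z.2)
      invFun := fun w => (w.1 + w.2, w.1)
      left_inv := fun z => by simp
      right_inv := fun w => by simp }
  have hgg : Summable (fun z : (Fin d → ℤ) × (Fin d → ℤ) => ‖a z.2‖ * ‖a (z.1 - z.2)‖) := by
    have := (Equiv.summable_iff φ (f := fun w : (Fin d → ℤ) × (Fin d → ℤ) => ‖a w.1‖ * ‖a w.2‖)).2 hg2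
    exact this
  have hfk : ∀ k, Summable (fun l => ‖a l‖ * ‖a (k - l)‖) := fun k => hgg.prod_factor k
  set f : (Fin d → ℤ) → ℝ := fun k => ∑' l, ‖a l‖ * ‖a (k - l)‖ with hfdef
  have hf_sum : Summable f := hgg.prod
  have hf_nonneg : ∀ k, 0 ≤ f k :=
    fun k => tsum_nonneg fun l => mul_nonneg (norm_nonneg _) (norm_nonneg _)
  have hf_tsum : ∑' k, f k = T ^ 2 := by
    have h1 : ∑' k, f k = ∑' z : (Fin d → ℤ) × (Fin d → ℤ), ‖a z.2‖ * ‖a (z.1 - z.2)‖ :=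
      (hgg.tsum_prod).symm
    have h2 : ∑' z : (Fin d → ℤ) × (Fin d → ℤ), ‖a z.2‖ * ‖a (z.1 - z.2)‖
        = ∑' w : (Fin d → ℤ) × (Fin d → ℤ), ‖a w.1‖ * ‖a w.2‖ :=
      φ.tsum_eq (fun w : (Fin d → ℤ) × (Fin d → ℤ) => ‖a w.1‖ * ‖a w.2‖)
    have h3 : ((∑' n, ‖a n‖) * ∑' n, ‖a n‖)
        = ∑' w : (Fin d → ℤ) × (Fin d → ℤ), ‖a w.1‖ * ‖a w.2‖ :=
      ha.tsum_mul_tsum ha hg2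
    rw [h1, h2, ← h3, hT]; ring
  -- term-wise bound
  have hterm_bound : ∀ k l : Fin d → ℤ,
      ‖(E l (k - l) - E (k - l) (k - l)) * a l * a (k - l)‖ ≤ ε * (‖a l‖ * ‖a (k - l)‖) := by
    intro k l
    rw [norm_mul, norm_mul]
    have h1 : ‖E l (k - l) - E (k - l) (k - l)‖ ≤ ε :=
      (norm_sub_le _ _).trans (by linarith [hE_bound l (k - l), hE_bound (k - l) (k - l)])
    have h2 := mul_le_mul_of_nonneg_right
      (mul_le_mul_of_nonneg_right h1 (norm_nonneg (a l))) (norm_nonneg (a (k - l)))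
    linarith [h2, mul_assoc ε ‖a l‖ ‖a (k - l)‖]
  have hnorm_sum : ∀ k, Summable (fun l =>
      ‖(E l (k - l) - E (k - l) (k - l)) * a l * a (k - l)‖) := fun k =>
    Summable.of_nonneg_of_le (fun l => norm_nonneg _) (hterm_bound k) ((hfk k).mul_left ε)
  have hc_bound : ∀ k, ‖∑' l, (E l (k - l) - E (k - l) (k - l)) * a l * a (k - l)‖ ≤ ε * f k := by
    intro k
    refine (norm_tsum_le_tsum_norm (hnorm_sum k)).trans ?_
    have := Summable.tsum_le_tsum (hterm_bound k) (hnorm_sum k) ((hfk k).mul_left ε)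
    rwa [tsum_mul_left] at this
  have hfle : ∀ k, f k ≤ T ^ 2 := fun k =>
    hf_tsum ▸ Summable.le_tsum hf_sum k (fun j _ => hf_nonneg j)
  have hsq_bound : ∀ k,
      ‖∑' l, (E l (k - l) - E (k - l) (k - l)) * a l * a (k - l)‖ ^ 2
        ≤ ε ^ 2 * T ^ 2 * f k := by
    intro k
    have h1 := hc_bound k
    have h2 := hfle k
    nlinarith [norm_nonneg (∑' l, (E l (k - l) - E (k - l) (k - l)) * a l * a (k - l)),
      hf_nonneg k, hε.le, hT0, sq_nonneg ε, mul_nonneg (sq_nonneg ε) (hf_nonneg k)]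
  have hsq_sum : Summable (fun k =>
      ‖∑' l, (E l (k - l) - E (k - l) (k - l)) * a l * a (k - l)‖ ^ 2) :=
    Summable.of_nonneg_of_le (fun k => sq_nonneg _) hsq_bound (hf_sum.mul_left _)
  have htsum_le : (∑' k, ‖∑' l, (E l (k - l) - E (k - l) (k - l)) * a l * a (k - l)‖ ^ 2)
      ≤ (ε * T ^ 2) ^ 2 := by
    have := Summable.tsum_le_tsum hsq_bound hsq_sum (hf_sum.mul_left _)
    rwa [tsum_mul_left, hf_tsum, show ε ^ 2 * T ^ 2 * T ^ 2 = (ε * T ^ 2) ^ 2 by ring] at this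
  calc Real.sqrt (∑' k : Fin d → ℤ, ‖∑' l : Fin d → ℤ,
        ((G l (k - l) - G (k - l) (k - l)) -
          ((∑ t, Γ t (l + (k - l)) * A t l * Bf t (k - l)) -
            (∑ t, Γ t ((k - l) + (k - l)) * A t (k - l) * Bf t (k - l))))
          * a l * a (k - l)‖ ^ 2)
      = Real.sqrt (∑' k, ‖∑' l, (E l (k - l) - E (k - l) (k - l)) * a l * a (k - l)‖ ^ 2) := by
        congr 1
        exact tsum_congr fun k => by rw [tsum_congr fun l => hpt k l]
    _ ≤ Real.sqrt ((ε * T ^ 2) ^ 2) := Real.sqrt_le_sqrt htsum_le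
    _ = ε * T ^ 2 := Real.sqrt_sq (by positivity)
end

section
/- Let d ≥ 1, δ ∈ (0,1), and let α, α', β, β', γ, γ', a : ℤ^d → ℂ with ‖α‖_{ℓ²}, ‖α'‖_{ℓ²}, ‖β‖_{ℓ²}, ‖β'‖_{ℓ²}, ‖a‖_{ℓ²} < ∞ and ‖γ‖_{ℓ⁴}, ‖γ'‖_{ℓ⁴} < ∞. Assume ‖α − α'‖_{ℓ²} < δ, ‖β − β'‖_{ℓ²} < δ, and ‖γ − γ'‖_{ℓ⁴} < δ. Set ζ := (α·a)*(β·a), ζ' := (α'·a)*(β'·a), A := ‖γ‖_{ℓ⁴}(1 + ‖α‖_{ℓ²} + ‖β‖_{ℓ²}), and B := (1 + ‖α‖_{ℓ²})(1 + ‖β‖_{ℓ²})(1 + ‖γ‖_{ℓ⁴}). Then ‖γ·ζ − γ'·ζ'‖_{ℓ²} ≤ δ (A + B) ‖a‖_{ℓ²}². -/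
open scoped BigOperators

/-- The `ℓ²` norm of a function on `ℤ^d` (defined via `tsum`). -/
noncomputable def l2Norm {d : ℕ} (f : (Fin d → ℤ) → ℂ) : ℝ :=
  Real.sqrt (∑' k : Fin d → ℤ, ‖f k‖ ^ 2)

/-- The `ℓ⁴` norm of a function on `ℤ^d` (defined via `tsum`). -/
noncomputable def l4Norm {d : ℕ} (f : (Fin d → ℤ) → ℂ) : ℝ :=
  (∑' k : Fin d → ℤ, ‖f k‖ ^ 4) ^ ((1 : ℝ) / 4)

/-- Discrete convolution on `ℤ^d`: `(f * g)_k = Σ_l f_l g_{k−l}`. -/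
noncomputable def zConv {d : ℕ} (f g : (Fin d → ℤ) → ℂ) : (Fin d → ℤ) → ℂ :=
  fun k => ∑' l : Fin d → ℤ, f l * g (k - l)

open MeasureTheory ENNReal

section helpers
variable {ι : Type*} [Countable ι] [MeasurableSpace ι] [MeasurableSingletonClass ι]

private lemma st6_conj2 : Real.HolderConjugate 2 2 := Real.holderConjugate_iff.mpr ⟨one_lt_two, by norm_num⟩

lemma st6_cs (F G : ι → ℝ≥0∞) :
    ∑' k, F k * G k ≤
      (∑' k, F k ^ (2:ℝ)) ^ (1/2:ℝ) * (∑' k, G k ^ (2:ℝ)) ^ (1/2:ℝ) := by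
  have h := ENNReal.lintegral_mul_le_Lp_mul_Lq (Measure.count (α := ι)) st6_conj2
    (measurable_of_countable F).aemeasurable (measurable_of_countable G).aemeasurable
  simpa [lintegral_count] using h

lemma st6_mink2 (F G : ι → ℝ≥0∞) :
    (∑' k, (F k + G k) ^ (2:ℝ)) ^ (1/2:ℝ) ≤
      (∑' k, F k ^ (2:ℝ)) ^ (1/2:ℝ) + (∑' k, G k ^ (2:ℝ)) ^ (1/2:ℝ) := by
  have h := ENNReal.lintegral_Lp_add_le (μ := Measure.count (α := ι))
    (measurable_of_countable F).aemeasurable (measurable_of_countable G).aemeasurable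
    (one_le_two (α := ℝ))
  simpa [lintegral_count] using h

lemma st6_mono2 {F G : ι → ℝ≥0∞} (h : ∀ k, F k ≤ G k) :
    (∑' k, F k ^ (2:ℝ)) ^ (1/2:ℝ) ≤ (∑' k, G k ^ (2:ℝ)) ^ (1/2:ℝ) :=
  ENNReal.rpow_le_rpow
    (ENNReal.tsum_le_tsum fun k => ENNReal.rpow_le_rpow (h k) (by norm_num)) (by norm_num)

lemma st6_h44 (F G : ι → ℝ≥0∞) :
    (∑' k, (F k * G k) ^ (2:ℝ)) ^ (1/2:ℝ) ≤
      (∑' k, F k ^ (4:ℝ)) ^ (1/4:ℝ) * (∑' k, G k ^ (4:ℝ)) ^ (1/4:ℝ) := by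
  have h := st6_cs (fun k => F k ^ (2:ℝ)) (fun k => G k ^ (2:ℝ))
  have e4 : ∀ x : ℝ≥0∞, (x ^ (2:ℝ)) ^ (2:ℝ) = x ^ (4:ℝ) := by
    intro x; rw [← ENNReal.rpow_mul]; norm_num
  simp only [e4] at h
  calc (∑' k, (F k * G k) ^ (2:ℝ)) ^ (1/2:ℝ)
      = (∑' k, F k ^ (2:ℝ) * G k ^ (2:ℝ)) ^ (1/2:ℝ) := by
        congr 1; exact tsum_congr fun k => ENNReal.mul_rpow_of_nonneg _ _ (by norm_num)
    _ ≤ ((∑' k, F k ^ (4:ℝ)) ^ (1/2:ℝ) * (∑' k, G k ^ (4:ℝ)) ^ (1/2:ℝ)) ^ (1/2:ℝ) :=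
        ENNReal.rpow_le_rpow h (by norm_num)
    _ = (∑' k, F k ^ (4:ℝ)) ^ (1/4:ℝ) * (∑' k, G k ^ (4:ℝ)) ^ (1/4:ℝ) := by
        rw [ENNReal.mul_rpow_of_nonneg _ _ (by norm_num : (0:ℝ) ≤ 1/2),
          ← ENNReal.rpow_mul, ← ENNReal.rpow_mul]; norm_num

lemma st6_e4_le_e1 (F : ι → ℝ≥0∞) :
    (∑' k, F k ^ (4:ℝ)) ^ (1/4:ℝ) ≤ ∑' k, F k := by
  have hb : ∀ k, F k ≤ ∑' j, F j := fun k => ENNReal.le_tsum k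
  have key : ∑' k, F k ^ (4:ℝ) ≤ (∑' k, F k) ^ (4:ℝ) := by
    have : ∀ x : ℝ≥0∞, x ^ (4:ℝ) = x ^ (4:ℕ) := fun x => by
      rw [← ENNReal.rpow_natCast]; norm_num
    simp only [this]
    calc ∑' k, F k ^ (4:ℕ) ≤ ∑' k, F k * (∑' j, F j) ^ (3:ℕ) := by
          refine ENNReal.tsum_le_tsum fun k => ?_
          calc F k ^ (4:ℕ) = F k * F k ^ (3:ℕ) := by ring
            _ ≤ F k * (∑' j, F j) ^ (3:ℕ) :=
              mul_le_mul_right (pow_le_pow_left' (hb k) 3) _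
      _ = (∑' k, F k) * (∑' j, F j) ^ (3:ℕ) := ENNReal.tsum_mul_right
      _ = (∑' k, F k) ^ (4:ℕ) := by ring
  calc (∑' k, F k ^ (4:ℝ)) ^ (1/4:ℝ) ≤ ((∑' k, F k) ^ (4:ℝ)) ^ (1/4:ℝ) :=
        ENNReal.rpow_le_rpow key (by norm_num)
    _ = ∑' k, F k := by rw [← ENNReal.rpow_mul]; norm_num

lemma st6_tsum2_eq {f : ι → ℂ} (hf : Summable fun k => ‖f k‖ ^ 2) :
    (∑' k, ENNReal.ofReal ‖f k‖ ^ (2:ℝ)) = ENNReal.ofReal (∑' k, ‖f k‖ ^ 2) := by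
  rw [ENNReal.ofReal_tsum_of_nonneg (fun k => sq_nonneg _) hf]
  refine tsum_congr fun k => ?_
  rw [ENNReal.ofReal_rpow_of_nonneg (norm_nonneg _) (by norm_num : (0:ℝ) ≤ 2)]
  congr 1
  rw [show (2:ℝ) = ((2:ℕ):ℝ) by norm_num, Real.rpow_natCast]

lemma st6_tsum4_eq {f : ι → ℂ} (hf : Summable fun k => ‖f k‖ ^ 4) :
    (∑' k, ENNReal.ofReal ‖f k‖ ^ (4:ℝ)) = ENNReal.ofReal (∑' k, ‖f k‖ ^ 4) := by
  rw [ENNReal.ofReal_tsum_of_nonneg (fun k => by positivity) hf]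
  refine tsum_congr fun k => ?_
  rw [ENNReal.ofReal_rpow_of_nonneg (norm_nonneg _) (by norm_num : (0:ℝ) ≤ 4)]
  congr 1
  rw [show (4:ℝ) = ((4:ℕ):ℝ) by norm_num, Real.rpow_natCast]

lemma st6_en2_eq {f : ι → ℂ} (hf : Summable fun k => ‖f k‖ ^ 2) :
    (∑' k, ENNReal.ofReal ‖f k‖ ^ (2:ℝ)) ^ (1/2:ℝ)
      = ENNReal.ofReal (Real.sqrt (∑' k, ‖f k‖ ^ 2)) := by
  rw [Real.sqrt_eq_rpow, st6_tsum2_eq hf,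
    ENNReal.ofReal_rpow_of_nonneg (tsum_nonneg fun k => sq_nonneg _) (by norm_num)]

lemma st6_en4_eq {f : ι → ℂ} (hf : Summable fun k => ‖f k‖ ^ 4) :
    (∑' k, ENNReal.ofReal ‖f k‖ ^ (4:ℝ)) ^ (1/4:ℝ)
      = ENNReal.ofReal ((∑' k, ‖f k‖ ^ 4) ^ ((1:ℝ)/4)) := by
  rw [st6_tsum4_eq hf,
    ENNReal.ofReal_rpow_of_nonneg (tsum_nonneg fun k => by positivity) (by norm_num)]

lemma st6_l1 {f g : ι → ℂ} (hf : Summable fun k => ‖f k‖ ^ 2)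
    (hg : Summable fun k => ‖g k‖ ^ 2) : Summable fun k => ‖f k * g k‖ := by
  refine Summable.of_nonneg_of_le (fun k => norm_nonneg _) (fun k => ?_)
    (((hf.add hg).mul_left (1/2)))
  rw [norm_mul]
  have := two_mul_le_add_sq ‖f k‖ ‖g k‖
  nlinarith [norm_nonneg (f k), norm_nonneg (g k)]

lemma st6_sub_sq {f g : ι → ℂ} (hf : Summable fun k => ‖f k‖ ^ 2)
    (hg : Summable fun k => ‖g k‖ ^ 2) : Summable fun k => ‖f k - g k‖ ^ 2 := by
  refine Summable.of_nonneg_of_le (fun k => sq_nonneg _) (fun k => ?_)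
    (((hf.add hg).mul_left 2))
  have h := norm_sub_le (f k) (g k)
  have h2 : ‖f k - g k‖ ^ 2 ≤ (‖f k‖ + ‖g k‖) ^ 2 := pow_le_pow_left₀ (norm_nonneg _) h 2
  nlinarith [sq_nonneg (‖f k‖ - ‖g k‖)]

lemma st6_sub_pow4 {f g : ι → ℂ} (hf : Summable fun k => ‖f k‖ ^ 4)
    (hg : Summable fun k => ‖g k‖ ^ 4) : Summable fun k => ‖f k - g k‖ ^ 4 := by
  refine Summable.of_nonneg_of_le (fun k => by positivity) (fun k => ?_)
    (((hf.add hg).mul_left 8))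
  have h := norm_sub_le (f k) (g k)
  have h2 : ‖f k - g k‖ ^ 4 ≤ (‖f k‖ + ‖g k‖) ^ 4 := pow_le_pow_left₀ (norm_nonneg _) h 4
  have k1 : (‖f k‖ + ‖g k‖) ^ 2 ≤ 2 * ‖f k‖ ^ 2 + 2 * ‖g k‖ ^ 2 := by
    nlinarith [sq_nonneg (‖f k‖ - ‖g k‖)]
  have k3 : ((‖f k‖ + ‖g k‖) ^ 2) ^ 2 ≤ (2 * ‖f k‖ ^ 2 + 2 * ‖g k‖ ^ 2) ^ 2 :=
    pow_le_pow_left₀ (sq_nonneg _) k1 2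
  nlinarith [h2, k3, sq_nonneg (‖f k‖ ^ 2 - ‖g k‖ ^ 2)]

lemma st6_e1_mul (f g : ι → ℂ) :
    (∑' k, ENNReal.ofReal ‖f k * g k‖) ≤
      (∑' k, ENNReal.ofReal ‖f k‖ ^ (2:ℝ)) ^ (1/2:ℝ) *
        (∑' k, ENNReal.ofReal ‖g k‖ ^ (2:ℝ)) ^ (1/2:ℝ) := by
  calc (∑' k, ENNReal.ofReal ‖f k * g k‖)
      = ∑' k, ENNReal.ofReal ‖f k‖ * ENNReal.ofReal ‖g k‖ := by
        refine tsum_congr fun k => ?_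
        rw [norm_mul, ENNReal.ofReal_mul (norm_nonneg _)]
    _ ≤ _ := st6_cs _ _

lemma st6_arith (x y g s de : ℝ≥0∞) :
    g * ((de * s) * (y * s)) + g * (((1+x) * s) * (de * s))
      + de * (((1+x) * s) * ((1+y) * s))
    ≤ de * (g * (1 + x + y) + (1+x) * (1+y) * (1+g)) * s^2 := by
  have key : g*y + g*(1+x) + (1+x)*(1+y) ≤ g*(1+x+y) + (1+x)*(1+y)*(1+g) := by
    have h1 : g*y + g*(1+x) + (1+x)*(1+y) = g*(1+x+y) + (1+x)*(1+y) := by ring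
    rw [h1]
    exact add_le_add le_rfl (le_mul_of_one_le_right (zero_le : (0:ℝ≥0∞) ≤ _) le_self_add)
  calc g * ((de * s) * (y * s)) + g * (((1+x) * s) * (de * s))
        + de * (((1+x) * s) * ((1+y) * s))
      = de * (g*y + g*(1+x) + (1+x)*(1+y)) * s^2 := by ring
    _ ≤ de * (g*(1+x+y) + (1+x)*(1+y)*(1+g)) * s^2 :=
        mul_le_mul' (mul_le_mul' le_rfl key) le_rfl

end helpers

section conv
variable {d : ℕ}

lemma st6_convSummand {f g : (Fin d → ℤ) → ℂ} (hf : Summable fun l => ‖f l‖)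
    (hg : Summable fun l => ‖g l‖) (k : Fin d → ℤ) :
    Summable fun l => f l * g (k - l) := by
  refine Summable.of_norm ?_
  refine Summable.of_nonneg_of_le (fun l => norm_nonneg _) (fun l => ?_)
    (hf.mul_right (∑' m, ‖g m‖))
  rw [norm_mul]
  exact mul_le_mul_of_nonneg_left (Summable.le_tsum hg (k - l) fun _ _ => norm_nonneg _)
    (norm_nonneg _)

lemma st6_conv (f g : (Fin d → ℤ) → ℂ) :
    (∑' k, ENNReal.ofReal ‖zConv f g k‖) ≤
      (∑' k, ENNReal.ofReal ‖f k‖) * (∑' k, ENNReal.ofReal ‖g k‖) := by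
  have step1 : ∀ k, ENNReal.ofReal ‖zConv f g k‖ ≤
      ∑' l, ENNReal.ofReal ‖f l‖ * ENNReal.ofReal ‖g (k - l)‖ := by
    intro k
    by_cases h : Summable fun l => ‖f l * g (k - l)‖
    · calc ENNReal.ofReal ‖zConv f g k‖
          ≤ ENNReal.ofReal (∑' l, ‖f l * g (k - l)‖) :=
            ENNReal.ofReal_le_ofReal (norm_tsum_le_tsum_norm h)
        _ = ∑' l, ENNReal.ofReal ‖f l * g (k - l)‖ :=
            ENNReal.ofReal_tsum_of_nonneg (fun _ => norm_nonneg _) h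
        _ = ∑' l, ENNReal.ofReal ‖f l‖ * ENNReal.ofReal ‖g (k - l)‖ := by
            refine tsum_congr fun l => ?_
            rw [norm_mul, ENNReal.ofReal_mul (norm_nonneg _)]
    · have h2 : ¬ Summable fun l => f l * g (k - l) := fun hs => h hs.norm
      have : zConv f g k = 0 := tsum_eq_zero_of_not_summable h2
      simp [this]
  calc (∑' k, ENNReal.ofReal ‖zConv f g k‖)
      ≤ ∑' k, ∑' l, ENNReal.ofReal ‖f l‖ * ENNReal.ofReal ‖g (k - l)‖ :=
        ENNReal.tsum_le_tsum step1
    _ = ∑' l, ∑' k, ENNReal.ofReal ‖f l‖ * ENNReal.ofReal ‖g (k - l)‖ :=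
        ENNReal.tsum_comm
    _ = ∑' l, ENNReal.ofReal ‖f l‖ * ∑' k, ENNReal.ofReal ‖g (k - l)‖ := by
        refine tsum_congr fun l => ?_; rw [ENNReal.tsum_mul_left]
    _ = ∑' l, ENNReal.ofReal ‖f l‖ * ∑' k, ENNReal.ofReal ‖g k‖ := by
        refine tsum_congr fun l => ?_
        congr 1
        exact (Equiv.subRight l).tsum_eq fun k => ENNReal.ofReal ‖g k‖
    _ = (∑' k, ENNReal.ofReal ‖f k‖) * (∑' k, ENNReal.ofReal ‖g k‖) :=
        ENNReal.tsum_mul_right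

end conv

section E
variable {ι : Type*} [Countable ι] [MeasurableSpace ι] [MeasurableSingletonClass ι]

noncomputable def st6E1 (f : ι → ℂ) : ℝ≥0∞ := ∑' k, ENNReal.ofReal ‖f k‖
noncomputable def st6E2 (f : ι → ℂ) : ℝ≥0∞ :=
  (∑' k, ENNReal.ofReal ‖f k‖ ^ (2:ℝ)) ^ (1/2:ℝ)
noncomputable def st6E4 (f : ι → ℂ) : ℝ≥0∞ :=
  (∑' k, ENNReal.ofReal ‖f k‖ ^ (4:ℝ)) ^ (1/4:ℝ)

lemma st6_E1_mul (f g : ι → ℂ) :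
    st6E1 (fun k => f k * g k) ≤ st6E2 f * st6E2 g := st6_e1_mul f g

lemma st6_E4_le_E1 (f : ι → ℂ) : st6E4 f ≤ st6E1 f := st6_e4_le_e1 _

lemma st6_E2_eq {f : ι → ℂ} (hf : Summable fun k => ‖f k‖ ^ 2) :
    st6E2 f = ENNReal.ofReal (Real.sqrt (∑' k, ‖f k‖ ^ 2)) := st6_en2_eq hf

lemma st6_E4_eq {f : ι → ℂ} (hf : Summable fun k => ‖f k‖ ^ 4) :
    st6E4 f = ENNReal.ofReal ((∑' k, ‖f k‖ ^ 4) ^ ((1:ℝ)/4)) := st6_en4_eq hf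

lemma st6_E2_tri {h f g : ι → ℂ} (hpt : ∀ k, ‖h k‖ ≤ ‖f k‖ + ‖g k‖) :
    st6E2 h ≤ st6E2 f + st6E2 g := by
  refine le_trans (st6_mono2 (G := fun k => ENNReal.ofReal ‖f k‖ + ENNReal.ofReal ‖g k‖)
    fun k => ?_) (st6_mink2 _ _)
  show ENNReal.ofReal ‖h k‖ ≤ ENNReal.ofReal ‖f k‖ + ENNReal.ofReal ‖g k‖
  rw [← ENNReal.ofReal_add (norm_nonneg _) (norm_nonneg _)]
  exact ENNReal.ofReal_le_ofReal (hpt k)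

lemma st6_summable_of_ne_top {f : ι → ℂ}
    (h : (∑' k, ENNReal.ofReal ‖f k‖ ^ (2:ℝ)) ≠ ∞) :
    Summable fun k => ‖f k‖ ^ 2 := by
  refine (ENNReal.summable_toReal h).congr fun k => ?_
  rw [ENNReal.ofReal_rpow_of_nonneg (norm_nonneg _) (by norm_num : (0:ℝ) ≤ 2),
    show (2:ℝ) = ((2:ℕ):ℝ) by norm_num, Real.rpow_natCast,
    ENNReal.toReal_ofReal (by positivity)]

end E

/-- Single-term perturbation estimate (core of Lemma 3.3 of the
paper): with `ζ := (α·a)*(β·a)`, `ζ' := (α'·a)*(β'·a)`,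
`A := ‖γ‖_{ℓ⁴}(1 + ‖α‖_{ℓ²} + ‖β‖_{ℓ²})` and
`B := (1 + ‖α‖_{ℓ²})(1 + ‖β‖_{ℓ²})(1 + ‖γ‖_{ℓ⁴})`, if the perturbed parameters
are `δ`-close (`δ ∈ (0,1)`), then `‖γ·ζ − γ'·ζ'‖_{ℓ²} ≤ δ (A + B) ‖a‖_{ℓ²}²`. -/
theorem statement6 (d : ℕ) (hd : 1 ≤ d) (δ : ℝ) (hδ0 : 0 < δ) (hδ1 : δ < 1)
    (α α' β β' γ γ' a : (Fin d → ℤ) → ℂ)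
    (hα : Summable fun k => ‖α k‖ ^ 2)
    (hα' : Summable fun k => ‖α' k‖ ^ 2)
    (hβ : Summable fun k => ‖β k‖ ^ 2)
    (hβ' : Summable fun k => ‖β' k‖ ^ 2)
    (ha : Summable fun k => ‖a k‖ ^ 2)
    (hγ : Summable fun k => ‖γ k‖ ^ 4)
    (hγ' : Summable fun k => ‖γ' k‖ ^ 4)
    (hαδ : l2Norm (fun n => α n - α' n) < δ)
    (hβδ : l2Norm (fun n => β n - β' n) < δ)
    (hγδ : l4Norm (fun n => γ n - γ' n) < δ) :
    l2Norm (fun k => γ k * zConv (fun n => α n * a n) (fun n => β n * a n) k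
        - γ' k * zConv (fun n => α' n * a n) (fun n => β' n * a n) k)
      ≤ δ * (l4Norm γ * (1 + l2Norm α + l2Norm β)
          + (1 + l2Norm α) * (1 + l2Norm β) * (1 + l4Norm γ)) * (l2Norm a) ^ 2 := by
  classical
  -- summability facts
  have hαd2 : Summable fun k => ‖α k - α' k‖ ^ 2 := st6_sub_sq hα hα'
  have hβd2 : Summable fun k => ‖β k - β' k‖ ^ 2 := st6_sub_sq hβ hβ'
  have hγd4 : Summable fun k => ‖γ k - γ' k‖ ^ 4 := st6_sub_pow4 hγ hγ'
  have hαa : Summable fun l => ‖α l * a l‖ := st6_l1 hα ha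
  have hα'a : Summable fun l => ‖α' l * a l‖ := st6_l1 hα' ha
  have hβa : Summable fun l => ‖β l * a l‖ := st6_l1 hβ ha
  have hβ'a : Summable fun l => ‖β' l * a l‖ := st6_l1 hβ' ha
  have hdαa : Summable fun l => ‖(α l - α' l) * a l‖ := st6_l1 hαd2 ha
  have hdβa : Summable fun l => ‖(β l - β' l) * a l‖ := st6_l1 hβd2 ha
  -- abbreviations
  set ζ := zConv (fun n => α n * a n) (fun n => β n * a n) with hζdef
  set ζ' := zConv (fun n => α' n * a n) (fun n => β' n * a n) with hζ'def
  set ζ₁ := zConv (fun n => (α n - α' n) * a n) (fun n => β n * a n) with hζ₁def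
  set ζ₂ := zConv (fun n => α' n * a n) (fun n => (β n - β' n) * a n) with hζ₂def
  -- splitting the difference of convolutions
  have hsplit : ∀ k, ζ k - ζ' k = ζ₁ k + ζ₂ k := by
    intro k
    have s1 := st6_convSummand hαa hβa k
    have s2 := st6_convSummand hα'a hβ'a k
    have s3 := st6_convSummand hdαa hβa k
    have s4 := st6_convSummand hα'a hdβa k
    rw [hζdef, hζ'def, hζ₁def, hζ₂def]
    unfold zConv
    rw [← Summable.tsum_sub s1 s2, ← Summable.tsum_add s3 s4]
    exact tsum_congr fun l => by ring
  -- the three pieces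
  set A : (Fin d → ℤ) → ℝ≥0∞ := fun k => ENNReal.ofReal ‖γ k‖ * ENNReal.ofReal ‖ζ₁ k‖
    with hAdef
  set B : (Fin d → ℤ) → ℝ≥0∞ := fun k => ENNReal.ofReal ‖γ k‖ * ENNReal.ofReal ‖ζ₂ k‖
    with hBdef
  set C : (Fin d → ℤ) → ℝ≥0∞ :=
    fun k => ENNReal.ofReal ‖γ k - γ' k‖ * ENNReal.ofReal ‖ζ' k‖ with hCdef
  have hpt : ∀ k, ENNReal.ofReal ‖γ k * ζ k - γ' k * ζ' k‖ ≤ (A k + B k) + C k := by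
    intro k
    have hre : γ k * ζ k - γ' k * ζ' k
        = γ k * ζ₁ k + γ k * ζ₂ k + (γ k - γ' k) * ζ' k := by
      linear_combination (γ k) * hsplit k
    calc ENNReal.ofReal ‖γ k * ζ k - γ' k * ζ' k‖
        ≤ ENNReal.ofReal (‖γ k‖ * ‖ζ₁ k‖ + ‖γ k‖ * ‖ζ₂ k‖ + ‖γ k - γ' k‖ * ‖ζ' k‖) := by
          refine ENNReal.ofReal_le_ofReal ?_
          rw [hre]
          simpa [norm_mul] using norm_add₃_le
            (a := γ k * ζ₁ k) (b := γ k * ζ₂ k) (c := (γ k - γ' k) * ζ' k)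
      _ = (A k + B k) + C k := by
          rw [hAdef, hBdef, hCdef]
          rw [ENNReal.ofReal_add (by positivity) (by positivity),
            ENNReal.ofReal_add (by positivity) (by positivity),
            ENNReal.ofReal_mul (norm_nonneg _), ENNReal.ofReal_mul (norm_nonneg _),
            ENNReal.ofReal_mul (norm_nonneg _)]
  -- numeric abbreviations
  set x := st6E2 α with hxdef
  set y := st6E2 β with hydef
  set g := st6E4 γ with hgdef
  set s := st6E2 a with hsdef
  set de := ENNReal.ofReal δ with hdedef
  have hde1 : de ≤ 1 := by rw [hdedef]; exact ENNReal.ofReal_le_one.mpr hδ1.le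
  have hdα : st6E2 (fun n => α n - α' n) ≤ de := by
    rw [st6_E2_eq hαd2, hdedef]
    exact ENNReal.ofReal_le_ofReal hαδ.le
  have hdβ : st6E2 (fun n => β n - β' n) ≤ de := by
    rw [st6_E2_eq hβd2, hdedef]
    exact ENNReal.ofReal_le_ofReal hβδ.le
  have hdγ : st6E4 (fun n => γ n - γ' n) ≤ de := by
    rw [st6_E4_eq hγd4, hdedef]
    exact ENNReal.ofReal_le_ofReal hγδ.le
  have hα'2 : st6E2 α' ≤ 1 + x := by
    refine le_trans (st6_E2_tri (f := fun n => α n - α' n) (g := α) fun k => ?_) ?_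
    · show ‖α' k‖ ≤ ‖α k - α' k‖ + ‖α k‖
      have h := norm_sub_norm_le (α' k) (α k)
      rw [norm_sub_rev] at h
      linarith
    · calc st6E2 (fun n => α n - α' n) + st6E2 α ≤ de + x := add_le_add hdα le_rfl
        _ ≤ 1 + x := add_le_add hde1 le_rfl
  have hβ'2 : st6E2 β' ≤ 1 + y := by
    refine le_trans (st6_E2_tri (f := fun n => β n - β' n) (g := β) fun k => ?_) ?_
    · show ‖β' k‖ ≤ ‖β k - β' k‖ + ‖β k‖
      have h := norm_sub_norm_le (β' k) (β k)
      rw [norm_sub_rev] at h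
      linarith
    · calc st6E2 (fun n => β n - β' n) + st6E2 β ≤ de + y := add_le_add hdβ le_rfl
        _ ≤ 1 + y := add_le_add hde1 le_rfl
  -- ℓ¹ bounds
  have hE1dαa : st6E1 (fun n => (α n - α' n) * a n) ≤ de * s :=
    le_trans (st6_E1_mul _ _) (mul_le_mul' hdα le_rfl)
  have hE1dβa : st6E1 (fun n => (β n - β' n) * a n) ≤ de * s :=
    le_trans (st6_E1_mul _ _) (mul_le_mul' hdβ le_rfl)
  have hE1βa : st6E1 (fun n => β n * a n) ≤ y * s := st6_E1_mul _ _
  have hE1α'a : st6E1 (fun n => α' n * a n) ≤ (1 + x) * s :=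
    le_trans (st6_E1_mul _ _) (mul_le_mul' hα'2 le_rfl)
  have hE1β'a : st6E1 (fun n => β' n * a n) ≤ (1 + y) * s :=
    le_trans (st6_E1_mul _ _) (mul_le_mul' hβ'2 le_rfl)
  have hζ₁b : st6E1 ζ₁ ≤ (de * s) * (y * s) := by
    rw [hζ₁def]
    exact le_trans (st6_conv _ _) (mul_le_mul' hE1dαa hE1βa)
  have hζ₂b : st6E1 ζ₂ ≤ ((1 + x) * s) * (de * s) := by
    rw [hζ₂def]
    exact le_trans (st6_conv _ _) (mul_le_mul' hE1α'a hE1dβa)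
  have hζ'b : st6E1 ζ' ≤ ((1 + x) * s) * ((1 + y) * s) := by
    rw [hζ'def]
    exact le_trans (st6_conv _ _) (mul_le_mul' hE1α'a hE1β'a)
  -- bounds for the three pieces
  have hAb : (∑' k, A k ^ (2:ℝ)) ^ (1/2:ℝ) ≤ g * ((de * s) * (y * s)) := by
    rw [hAdef]
    exact le_trans (st6_h44 _ _)
      (mul_le_mul' le_rfl ((st6_E4_le_E1 ζ₁).trans hζ₁b))
  have hBb : (∑' k, B k ^ (2:ℝ)) ^ (1/2:ℝ) ≤ g * (((1 + x) * s) * (de * s)) := by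
    rw [hBdef]
    exact le_trans (st6_h44 _ _)
      (mul_le_mul' le_rfl ((st6_E4_le_E1 ζ₂).trans hζ₂b))
  have hCb : (∑' k, C k ^ (2:ℝ)) ^ (1/2:ℝ) ≤ de * (((1 + x) * s) * ((1 + y) * s)) := by
    rw [hCdef]
    exact le_trans (st6_h44 _ _)
      (mul_le_mul' hdγ ((st6_E4_le_E1 ζ').trans hζ'b))
  -- main ℝ≥0∞ estimate
  have main : st6E2 (fun k => γ k * ζ k - γ' k * ζ' k)
      ≤ de * (g * (1 + x + y) + (1 + x) * (1 + y) * (1 + g)) * s ^ 2 := by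
    calc st6E2 (fun k => γ k * ζ k - γ' k * ζ' k)
        ≤ (∑' k, ((A k + B k) + C k) ^ (2:ℝ)) ^ (1/2:ℝ) := st6_mono2 hpt
      _ ≤ (∑' k, (A k + B k) ^ (2:ℝ)) ^ (1/2:ℝ) + (∑' k, C k ^ (2:ℝ)) ^ (1/2:ℝ) :=
          st6_mink2 _ _
      _ ≤ ((∑' k, A k ^ (2:ℝ)) ^ (1/2:ℝ) + (∑' k, B k ^ (2:ℝ)) ^ (1/2:ℝ))
            + (∑' k, C k ^ (2:ℝ)) ^ (1/2:ℝ) := add_le_add (st6_mink2 _ _) le_rfl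
      _ ≤ (g * ((de * s) * (y * s)) + g * (((1 + x) * s) * (de * s)))
            + de * (((1 + x) * s) * ((1 + y) * s)) :=
          add_le_add (add_le_add hAb hBb) hCb
      _ ≤ de * (g * (1 + x + y) + (1 + x) * (1 + y) * (1 + g)) * s ^ 2 := by
          simpa [add_assoc] using st6_arith x y g s de
  -- nonnegativity facts
  have hn2α : (0:ℝ) ≤ l2Norm α := Real.sqrt_nonneg _
  have hn2β : (0:ℝ) ≤ l2Norm β := Real.sqrt_nonneg _
  have hn2a : (0:ℝ) ≤ l2Norm a := Real.sqrt_nonneg _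
  have hn4γ : (0:ℝ) ≤ l4Norm γ := Real.rpow_nonneg (tsum_nonneg fun k => by positivity) _
  have h1α : (0:ℝ) ≤ 1 + l2Norm α := by linarith
  have h1β : (0:ℝ) ≤ 1 + l2Norm β := by linarith
  have h1γ : (0:ℝ) ≤ 1 + l4Norm γ := by linarith
  have h1xy : (0:ℝ) ≤ 1 + l2Norm α + l2Norm β := by linarith
  have hM : (0:ℝ) ≤ l4Norm γ * (1 + l2Norm α + l2Norm β)
      + (1 + l2Norm α) * (1 + l2Norm β) * (1 + l4Norm γ) :=
    add_nonneg (mul_nonneg hn4γ h1xy) (mul_nonneg (mul_nonneg h1α h1β) h1γ)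
  -- identifications of the norms
  have hxeq : x = ENNReal.ofReal (l2Norm α) := by rw [hxdef, st6_E2_eq hα]; rfl
  have hyeq : y = ENNReal.ofReal (l2Norm β) := by rw [hydef, st6_E2_eq hβ]; rfl
  have hseq : s = ENNReal.ofReal (l2Norm a) := by rw [hsdef, st6_E2_eq ha]; rfl
  have hgeq : g = ENNReal.ofReal (l4Norm γ) := by rw [hgdef, st6_E4_eq hγ]; rfl
  -- the RHS as an `ofReal`
  have hQ : ENNReal.ofReal (δ * (l4Norm γ * (1 + l2Norm α + l2Norm β)
        + (1 + l2Norm α) * (1 + l2Norm β) * (1 + l4Norm γ)) * l2Norm a ^ 2)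
      = de * (g * (1 + x + y) + (1 + x) * (1 + y) * (1 + g)) * s ^ 2 := by
    rw [hxeq, hyeq, hseq, hgeq, hdedef]
    rw [ENNReal.ofReal_mul (mul_nonneg hδ0.le hM), ENNReal.ofReal_mul hδ0.le,
      ENNReal.ofReal_pow hn2a,
      ENNReal.ofReal_add (mul_nonneg hn4γ h1xy) (mul_nonneg (mul_nonneg h1α h1β) h1γ),
      ENNReal.ofReal_mul hn4γ, ENNReal.ofReal_mul (mul_nonneg h1α h1β),
      ENNReal.ofReal_mul h1α,
      ENNReal.ofReal_add (by linarith : (0:ℝ) ≤ 1 + l2Norm α) hn2β,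
      ENNReal.ofReal_add zero_le_one hn2α, ENNReal.ofReal_add zero_le_one hn2β,
      ENNReal.ofReal_add zero_le_one hn4γ, ENNReal.ofReal_one]
  rw [← hQ] at main
  -- finiteness and summability of the left-hand side
  have hT : (∑' k, ENNReal.ofReal ‖γ k * ζ k - γ' k * ζ' k‖ ^ (2:ℝ)) ≠ ∞ := by
    intro h
    have : st6E2 (fun k => γ k * ζ k - γ' k * ζ' k) = ∞ := by
      rw [st6E2, h]
      simp [ENNReal.top_rpow_of_pos (by norm_num : (0:ℝ) < 1/2)]
    rw [this] at main
    exact (ENNReal.ofReal_ne_top) (top_le_iff.mp main)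
  have hsum2 : Summable fun k => ‖γ k * ζ k - γ' k * ζ' k‖ ^ 2 :=
    st6_summable_of_ne_top hT
  have hl2 : l2Norm (fun k => γ k * ζ k - γ' k * ζ' k)
      = (st6E2 (fun k => γ k * ζ k - γ' k * ζ' k)).toReal := by
    rw [st6_E2_eq hsum2, ENNReal.toReal_ofReal (Real.sqrt_nonneg _)]
    rfl
  calc l2Norm (fun k => γ k * ζ k - γ' k * ζ' k)
      = (st6E2 (fun k => γ k * ζ k - γ' k * ζ' k)).toReal := hl2
    _ ≤ (ENNReal.ofReal (δ * (l4Norm γ * (1 + l2Norm α + l2Norm β)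
          + (1 + l2Norm α) * (1 + l2Norm β) * (1 + l4Norm γ)) * l2Norm a ^ 2)).toReal :=
        ENNReal.toReal_mono ENNReal.ofReal_ne_top main
    _ = δ * (l4Norm γ * (1 + l2Norm α + l2Norm β)
          + (1 + l2Norm α) * (1 + l2Norm β) * (1 + l4Norm γ)) * l2Norm a ^ 2 :=
        ENNReal.toReal_ofReal (mul_nonneg (mul_nonneg hδ0.le hM) (by positivity))
end

section
/- Let d ≥ 1, M ∈ ℕ, δ ∈ (0,1), and for t = 1, …, M let α_t, α'_t, β_t, β'_t, γ_t, γ'_t, a : ℤ^d → ℂ satisfy ‖α_t‖_{ℓ²}, ‖α'_t‖_{ℓ²}, ‖β_t‖_{ℓ²}, ‖β'_t‖_{ℓ²}, ‖a‖_{ℓ²} < ∞, ‖γ_t‖_{ℓ⁴}, ‖γ'_t‖_{ℓ⁴} < ∞, together with ‖α_t − α'_t‖_{ℓ²} < δ, ‖β_t − β'_t‖_{ℓ²} < δ, ‖γ_t − γ'_t‖_{ℓ⁴} < δ. Set A_t := ‖γ_t‖_{ℓ⁴}(1 + ‖α_t‖_{ℓ²} + ‖β_t‖_{ℓ²}), B_t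 := (1 + ‖α_t‖_{ℓ²})(1 + ‖β_t‖_{ℓ²})(1 + ‖γ_t‖_{ℓ⁴}), and c := max_{1 ≤ t ≤ M} (A_t + B_t). Then ‖ Σ_{t=1}^{M} [ γ_t·((α_t·a)*(β_t·a)) − γ'_t·((α'_t·a)*(β'_t·a)) ] ‖_{ℓ²} ≤ M δ c ‖a‖_{ℓ²}². -/
open scoped BigOperators

section Aux7

open MeasureTheory ENNReal

lemma enn_CS' {ι : Type*} (F G : ι → ℝ≥0∞) :
    ∑' i, F i * G i ≤ (∑' i, F i ^ 2) ^ ((1:ℝ)/2) * (∑' i, G i ^ 2) ^ ((1:ℝ)/2) := by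
  letI : MeasurableSpace ι := ⊤
  haveI : MeasurableSingletonClass ι := ⟨fun _ => trivial⟩
  have h := ENNReal.lintegral_mul_le_Lp_mul_Lq (Measure.count : Measure ι)
    (Real.holderConjugate_iff.mpr ⟨by norm_num, by norm_num⟩ : Real.HolderConjugate 2 2)
    (measurable_from_top (f := F)).aemeasurable (measurable_from_top (f := G)).aemeasurable
  simp only [lintegral_count, Pi.mul_apply] at h
  have e2 : ∀ x : ℝ≥0∞, x ^ (2:ℝ) = x ^ (2:ℕ) := by
    intro x; rw [← ENNReal.rpow_natCast x 2]; norm_num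
  simpa [e2] using h

lemma enn_minkowski {ι : Type*} (F G : ι → ℝ≥0∞) {p : ℝ} (hp : 1 ≤ p) :
    (∑' i, (F i + G i) ^ p) ^ (1/p) ≤ (∑' i, F i ^ p) ^ (1/p) + (∑' i, G i ^ p) ^ (1/p) := by
  letI : MeasurableSpace ι := ⊤
  haveI : MeasurableSingletonClass ι := ⟨fun _ => trivial⟩
  have h := ENNReal.lintegral_Lp_add_le (μ := (Measure.count : Measure ι))
    (measurable_from_top (f := F)).aemeasurable (measurable_from_top (f := G)).aemeasurable hp
  simpa [lintegral_count] using h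

/-- squared Cauchy-Schwarz -/
lemma enn_CS {ι : Type*} (F G : ι → ℝ≥0∞) :
    (∑' i, F i * G i) ^ 2 ≤ (∑' i, F i ^ 2) * (∑' i, G i ^ 2) := by
  have h := enn_CS' F G
  have h2 := ENNReal.rpow_le_rpow h (by norm_num : (0:ℝ) ≤ 2)
  have e : ∀ x : ℝ≥0∞, (x ^ ((1:ℝ)/2)) ^ (2:ℝ) = x := by
    intro x; rw [← ENNReal.rpow_mul]; norm_num
  rw [ENNReal.mul_rpow_of_nonneg _ _ (by norm_num : (0:ℝ) ≤ 2), e, e] at h2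
  calc (∑' i, F i * G i) ^ 2 = (∑' i, F i * G i) ^ (2:ℝ) := by
        rw [← ENNReal.rpow_natCast _ 2]; norm_num
    _ ≤ _ := h2

noncomputable def eS {ι : Type*} (p : ℕ) (f : ι → ℂ) : ℝ≥0∞ :=
  ∑' k, (‖f k‖₊ : ℝ≥0∞) ^ p

noncomputable def n2 {ι : Type*} (f : ι → ℂ) : ℝ≥0∞ := (eS 2 f) ^ ((1:ℝ)/2)
noncomputable def n4 {ι : Type*} (f : ι → ℂ) : ℝ≥0∞ := (eS 4 f) ^ ((1:ℝ)/4)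

lemma pow_half_sq (x : ℝ≥0∞) : (x ^ ((1:ℝ)/2)) ^ 2 = x := by
  rw [← ENNReal.rpow_natCast (x ^ ((1:ℝ)/2)) 2, ← ENNReal.rpow_mul]; norm_num

lemma sq_pow_half (x : ℝ≥0∞) : (x ^ 2) ^ ((1:ℝ)/2) = x := by
  rw [← ENNReal.rpow_natCast x 2, ← ENNReal.rpow_mul]; norm_num

-- l2Norm/l4Norm conversions
lemma l2Norm_eq {d : ℕ} (f : (Fin d → ℤ) → ℂ) :
    Real.sqrt (∑' k : Fin d → ℤ, ‖f k‖ ^ 2) = (n2 f).toReal := by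
  have h : ((eS 2 f).toReal) = ∑' k : Fin d → ℤ, ‖f k‖ ^ 2 := by
    rw [eS, ENNReal.tsum_toReal_eq (fun k => ENNReal.pow_ne_top ENNReal.coe_ne_top)]
    exact tsum_congr fun k => by simp [ENNReal.toReal_pow]
  rw [n2, ← ENNReal.toReal_rpow, h, Real.sqrt_eq_rpow]

lemma l4Norm_eq {d : ℕ} (f : (Fin d → ℤ) → ℂ) :
    (∑' k : Fin d → ℤ, ‖f k‖ ^ 4) ^ ((1 : ℝ) / 4) = (n4 f).toReal := by
  have h : ((eS 4 f).toReal) = ∑' k : Fin d → ℤ, ‖f k‖ ^ 4 := by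
    rw [eS, ENNReal.tsum_toReal_eq (fun k => ENNReal.pow_ne_top ENNReal.coe_ne_top)]
    exact tsum_congr fun k => by simp [ENNReal.toReal_pow]
  rw [n4, ← ENNReal.toReal_rpow, h]

lemma eS_ne_top {ι : Type*} {p : ℕ} {f : ι → ℂ} (h : Summable fun k => ‖f k‖ ^ p) :
    eS p f ≠ ⊤ := by
  rw [eS]
  have : ∀ k, ((‖f k‖₊ : ℝ≥0∞)) ^ p = ((‖f k‖₊ ^ p : NNReal) : ℝ≥0∞) := by
    intro k; push_cast; ring
  rw [tsum_congr this]
  rw [ENNReal.tsum_coe_ne_top_iff_summable]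
  rw [← NNReal.summable_coe] at *
  simpa using h

lemma n2_ne_top {ι : Type*} {f : ι → ℂ} (h : Summable fun k => ‖f k‖ ^ 2) : n2 f ≠ ⊤ :=
  ENNReal.rpow_ne_top_of_nonneg (by norm_num) (eS_ne_top h)

lemma n4_ne_top {ι : Type*} {f : ι → ℂ} (h : Summable fun k => ‖f k‖ ^ 4) : n4 f ≠ ⊤ :=
  ENNReal.rpow_ne_top_of_nonneg (by norm_num) (eS_ne_top h)


variable {d : ℕ}

lemma tsum_translate7 (F : (Fin d → ℤ) → ℝ≥0∞) (k : Fin d → ℤ) :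
    ∑' l, F (k - l) = ∑' l, F l := by
  simpa using (Equiv.subLeft k).tsum_eq F

lemma tsum_translate7' (F : (Fin d → ℤ) → ℝ≥0∞) (l : Fin d → ℤ) :
    ∑' k, F (k - l) = ∑' k, F k := by
  simpa using (Equiv.subRight l).tsum_eq F

lemma conv_pt (u v : (Fin d → ℤ) → ℂ) (k : Fin d → ℤ) :
    (‖zConv u v k‖₊ : ℝ≥0∞) ≤ ∑' l, (‖u l‖₊ : ℝ≥0∞) * ‖v (k - l)‖₊ := by
  by_cases htop : (∑' l, (‖u l‖₊ : ℝ≥0∞) * ‖v (k - l)‖₊) = ⊤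
  · rw [htop]; exact le_top
  · have hs : Summable (fun l => ‖u l‖₊ * ‖v (k - l)‖₊) := by
      rw [← ENNReal.tsum_coe_ne_top_iff_summable]
      simpa [ENNReal.coe_mul] using htop
    have hs2 : Summable fun l => ‖u l * v (k - l)‖₊ := by simpa [nnnorm_mul] using hs
    have h1 : ‖∑' l, u l * v (k - l)‖₊ ≤ ∑' l, ‖u l * v (k - l)‖₊ := nnnorm_tsum_le hs2
    calc (‖zConv u v k‖₊ : ℝ≥0∞) ≤ ((∑' l, ‖u l * v (k - l)‖₊ : NNReal) : ℝ≥0∞) := by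
          exact_mod_cast h1
      _ = ∑' l, ((‖u l * v (k - l)‖₊ : NNReal) : ℝ≥0∞) := ENNReal.coe_tsum hs2
      _ = ∑' l, (‖u l‖₊ : ℝ≥0∞) * ‖v (k - l)‖₊ := by
          exact tsum_congr fun l => by simp [nnnorm_mul]

lemma conv_pt2 (u v : (Fin d → ℤ) → ℂ) (k : Fin d → ℤ) :
    (‖zConv u v k‖₊ : ℝ≥0∞) ≤ (eS 2 u) ^ ((1:ℝ)/2) * (eS 2 v) ^ ((1:ℝ)/2) := by
  refine (conv_pt u v k).trans ?_
  have h := enn_CS' (fun l => (‖u l‖₊ : ℝ≥0∞)) (fun l => (‖v (k - l)‖₊ : ℝ≥0∞))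
  have ht : (∑' l, ((‖v (k - l)‖₊ : ℝ≥0∞)) ^ 2) = eS 2 v :=
    tsum_translate7 (fun l => ((‖v l‖₊ : ℝ≥0∞)) ^ 2) k
  rw [ht] at h
  exact h

lemma half_mul_half (x : ℝ≥0∞) : x ^ ((1:ℝ)/2) * x ^ ((1:ℝ)/2) = x := by
  rw [← pow_two]; exact pow_half_sq x

lemma conv_eS2 (u v : (Fin d → ℤ) → ℂ) :
    eS 2 (zConv u v) ≤ eS 1 u * (eS 1 u * eS 2 v) := by
  have hpt : ∀ k, ((‖zConv u v k‖₊ : ℝ≥0∞)) ^ 2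
      ≤ eS 1 u * ∑' l, (‖u l‖₊ : ℝ≥0∞) * ((‖v (k - l)‖₊ : ℝ≥0∞)) ^ 2 := by
    intro k
    have h1 : ((‖zConv u v k‖₊ : ℝ≥0∞)) ^ 2 ≤ (∑' l, (‖u l‖₊ : ℝ≥0∞) * ‖v (k - l)‖₊) ^ 2 :=
      pow_le_pow_left' (conv_pt u v k) 2
    refine h1.trans ?_
    have h2 := enn_CS (fun l => ((‖u l‖₊ : ℝ≥0∞)) ^ ((1:ℝ)/2))
      (fun l => ((‖u l‖₊ : ℝ≥0∞)) ^ ((1:ℝ)/2) * ‖v (k - l)‖₊)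
    have e1 : (∑' l, ((‖u l‖₊ : ℝ≥0∞)) ^ ((1:ℝ)/2) * (((‖u l‖₊ : ℝ≥0∞)) ^ ((1:ℝ)/2) * ‖v (k - l)‖₊))
        = ∑' l, (‖u l‖₊ : ℝ≥0∞) * ‖v (k - l)‖₊ :=
      tsum_congr fun l => by rw [← mul_assoc, half_mul_half]
    have e2 : (∑' l, (((‖u l‖₊ : ℝ≥0∞)) ^ ((1:ℝ)/2)) ^ 2) = eS 1 u :=
      tsum_congr fun l => by rw [pow_half_sq]; simp [eS]
    have e3 : (∑' l, (((‖u l‖₊ : ℝ≥0∞)) ^ ((1:ℝ)/2) * ‖v (k - l)‖₊) ^ 2)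
        = ∑' l, (‖u l‖₊ : ℝ≥0∞) * ((‖v (k - l)‖₊ : ℝ≥0∞)) ^ 2 :=
      tsum_congr fun l => by rw [mul_pow, pow_half_sq]
    rw [e1, e2, e3] at h2
    simpa [eS] using h2
  calc eS 2 (zConv u v) ≤ ∑' k, eS 1 u * ∑' l, (‖u l‖₊ : ℝ≥0∞) * ((‖v (k - l)‖₊ : ℝ≥0∞)) ^ 2 :=
        ENNReal.tsum_le_tsum hpt
    _ = eS 1 u * ∑' k, ∑' l, (‖u l‖₊ : ℝ≥0∞) * ((‖v (k - l)‖₊ : ℝ≥0∞)) ^ 2 := by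
        rw [ENNReal.tsum_mul_left]
    _ = eS 1 u * ∑' l, ∑' k, (‖u l‖₊ : ℝ≥0∞) * ((‖v (k - l)‖₊ : ℝ≥0∞)) ^ 2 := by
        rw [ENNReal.tsum_comm]
    _ = eS 1 u * ∑' l, (‖u l‖₊ : ℝ≥0∞) * eS 2 v := by
        congr 1
        refine tsum_congr fun l => ?_
        rw [ENNReal.tsum_mul_left, tsum_translate7' (fun k => ((‖v k‖₊ : ℝ≥0∞)) ^ 2) l]
        rfl
    _ = eS 1 u * (eS 1 u * eS 2 v) := by
        rw [ENNReal.tsum_mul_right]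
        congr 2
        exact tsum_congr fun l => by simp [eS]

lemma conv_eS4 (u v : (Fin d → ℤ) → ℂ) :
    eS 4 (zConv u v) ≤ (eS 2 u * eS 2 v) * (eS 1 u * (eS 1 u * eS 2 v)) := by
  have hpt : ∀ k, ((‖zConv u v k‖₊ : ℝ≥0∞)) ^ 4
      ≤ (eS 2 u * eS 2 v) * ((‖zConv u v k‖₊ : ℝ≥0∞)) ^ 2 := by
    intro k
    have h1 : ((‖zConv u v k‖₊ : ℝ≥0∞)) ^ 2 ≤ eS 2 u * eS 2 v := by
      have := pow_le_pow_left' (conv_pt2 u v k) 2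
      refine this.trans ?_
      rw [mul_pow, pow_half_sq, pow_half_sq]
    calc ((‖zConv u v k‖₊ : ℝ≥0∞)) ^ 4 = ((‖zConv u v k‖₊ : ℝ≥0∞)) ^ 2 * ((‖zConv u v k‖₊ : ℝ≥0∞)) ^ 2 := by ring
      _ ≤ (eS 2 u * eS 2 v) * ((‖zConv u v k‖₊ : ℝ≥0∞)) ^ 2 := mul_le_mul' h1 le_rfl
  calc eS 4 (zConv u v) ≤ ∑' k, (eS 2 u * eS 2 v) * ((‖zConv u v k‖₊ : ℝ≥0∞)) ^ 2 :=
        ENNReal.tsum_le_tsum hpt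
    _ = (eS 2 u * eS 2 v) * eS 2 (zConv u v) := ENNReal.tsum_mul_left
    _ ≤ (eS 2 u * eS 2 v) * (eS 1 u * (eS 1 u * eS 2 v)) := mul_le_mul' le_rfl (conv_eS2 u v)

lemma key2 (γ u v : (Fin d → ℤ) → ℂ) :
    eS 2 (fun k => γ k * zConv u v k)
      ≤ (eS 4 γ) ^ ((1:ℝ)/2) * (eS 4 (zConv u v)) ^ ((1:ℝ)/2) := by
  have h := enn_CS' (fun k => ((‖γ k‖₊ : ℝ≥0∞)) ^ 2) (fun k => ((‖zConv u v k‖₊ : ℝ≥0∞)) ^ 2)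
  have e1 : (∑' k, ((‖γ k‖₊ : ℝ≥0∞)) ^ 2 * ((‖zConv u v k‖₊ : ℝ≥0∞)) ^ 2)
      = eS 2 (fun k => γ k * zConv u v k) :=
    tsum_congr fun k => by simp [eS, nnnorm_mul, mul_pow]
  have e2 : (∑' k, (((‖γ k‖₊ : ℝ≥0∞)) ^ 2) ^ 2) = eS 4 γ :=
    tsum_congr fun k => by rw [← pow_mul]
  have e3 : (∑' k, (((‖zConv u v k‖₊ : ℝ≥0∞)) ^ 2) ^ 2) = eS 4 (zConv u v) :=
    tsum_congr fun k => by rw [← pow_mul]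
  rw [e1, e2, e3] at h
  simpa [eS] using h

lemma eS2_mul (α a : (Fin d → ℤ) → ℂ) :
    eS 2 (fun k => α k * a k) ≤ eS 2 α * eS 2 a := by
  have hpt : ∀ k, ((‖α k * a k‖₊ : ℝ≥0∞)) ^ 2 ≤ ((‖α k‖₊ : ℝ≥0∞)) ^ 2 * eS 2 a := by
    intro k
    rw [nnnorm_mul, ENNReal.coe_mul, mul_pow]
    exact mul_le_mul' le_rfl (ENNReal.le_tsum k)
  calc eS 2 (fun k => α k * a k) ≤ ∑' k, ((‖α k‖₊ : ℝ≥0∞)) ^ 2 * eS 2 a :=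
        ENNReal.tsum_le_tsum hpt
    _ = eS 2 α * eS 2 a := ENNReal.tsum_mul_right

lemma eS1_mul (α a : (Fin d → ℤ) → ℂ) :
    eS 1 (fun k => α k * a k) ≤ (eS 2 α) ^ ((1:ℝ)/2) * (eS 2 a) ^ ((1:ℝ)/2) := by
  have h := enn_CS' (fun k => (‖α k‖₊ : ℝ≥0∞)) (fun k => (‖a k‖₊ : ℝ≥0∞))
  have e1 : (∑' k, (‖α k‖₊ : ℝ≥0∞) * (‖a k‖₊ : ℝ≥0∞)) = eS 1 (fun k => α k * a k) :=
    tsum_congr fun k => by simp [eS, nnnorm_mul]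
  rw [e1] at h
  simpa [eS] using h

lemma key3 (γ α β a : (Fin d → ℤ) → ℂ) :
    n2 (fun k => γ k * zConv (fun n => α n * a n) (fun n => β n * a n) k)
      ≤ n4 γ * (n2 α * (n2 β * (n2 a) ^ 2)) := by
  set u : (Fin d → ℤ) → ℂ := fun n => α n * a n with hu
  set v : (Fin d → ℤ) → ℂ := fun n => β n * a n with hv
  have h11 : eS 1 u * eS 1 u ≤ eS 2 α * eS 2 a := by
    calc eS 1 u * eS 1 u ≤ ((eS 2 α) ^ ((1:ℝ)/2) * (eS 2 a) ^ ((1:ℝ)/2))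
          * ((eS 2 α) ^ ((1:ℝ)/2) * (eS 2 a) ^ ((1:ℝ)/2)) := mul_le_mul' (eS1_mul α a) (eS1_mul α a)
      _ = eS 2 α * eS 2 a := by
          rw [mul_mul_mul_comm, half_mul_half, half_mul_half]
  have h4 : eS 4 (zConv u v) ≤ ((eS 2 α * eS 2 a) * (eS 2 β * eS 2 a)) ^ 2 := by
    refine (conv_eS4 u v).trans ?_
    have h1 : eS 2 u * eS 2 v ≤ (eS 2 α * eS 2 a) * (eS 2 β * eS 2 a) :=
      mul_le_mul' (eS2_mul α a) (eS2_mul β a)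
    have h2 : eS 1 u * (eS 1 u * eS 2 v) ≤ (eS 2 α * eS 2 a) * (eS 2 β * eS 2 a) := by
      rw [← mul_assoc]
      exact mul_le_mul' h11 (eS2_mul β a)
    calc eS 2 u * eS 2 v * (eS 1 u * (eS 1 u * eS 2 v))
        ≤ ((eS 2 α * eS 2 a) * (eS 2 β * eS 2 a)) * ((eS 2 α * eS 2 a) * (eS 2 β * eS 2 a)) :=
          mul_le_mul' h1 h2
      _ = ((eS 2 α * eS 2 a) * (eS 2 β * eS 2 a)) ^ 2 := (pow_two _).symm
  have hmain : eS 2 (fun k => γ k * zConv u v k)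
      ≤ (eS 4 γ) ^ ((1:ℝ)/2) * ((eS 2 α * eS 2 a) * (eS 2 β * eS 2 a)) := by
    refine (key2 γ u v).trans ?_
    refine mul_le_mul' le_rfl ?_
    calc (eS 4 (zConv u v)) ^ ((1:ℝ)/2)
        ≤ (((eS 2 α * eS 2 a) * (eS 2 β * eS 2 a)) ^ 2) ^ ((1:ℝ)/2) :=
          ENNReal.rpow_le_rpow h4 (by norm_num)
      _ = (eS 2 α * eS 2 a) * (eS 2 β * eS 2 a) := sq_pow_half _
  have := ENNReal.rpow_le_rpow hmain (by norm_num : (0:ℝ) ≤ 1/2)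
  rw [n2]
  refine this.trans (le_of_eq ?_)
  rw [ENNReal.mul_rpow_of_nonneg _ _ (by norm_num : (0:ℝ) ≤ 1/2),
      ENNReal.mul_rpow_of_nonneg _ _ (by norm_num : (0:ℝ) ≤ 1/2),
      ENNReal.mul_rpow_of_nonneg _ _ (by norm_num : (0:ℝ) ≤ 1/2),
      ENNReal.mul_rpow_of_nonneg _ _ (by norm_num : (0:ℝ) ≤ 1/2)]
  have hγ4 : ((eS 4 γ) ^ ((1:ℝ)/2)) ^ ((1:ℝ)/2) = n4 γ := by
    rw [← ENNReal.rpow_mul, n4]; norm_num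
  rw [hγ4, n2, n2, n2]
  have ha2 : (eS 2 a) ^ ((1:ℝ)/2) * (eS 2 a) ^ ((1:ℝ)/2) = ((eS 2 a) ^ ((1:ℝ)/2)) ^ 2 :=
    (pow_two _).symm
  ring

lemma n2_add_le {ι : Type*} (f g : ι → ℂ) :
    n2 (fun k => f k + g k) ≤ n2 f + n2 g := by
  have e2 : ∀ x : ℝ≥0∞, x ^ (2:ℝ) = x ^ (2:ℕ) := by
    intro x; rw [← ENNReal.rpow_natCast x 2]; norm_num
  have h := enn_minkowski (fun k => (‖f k‖₊ : ℝ≥0∞)) (fun k => (‖g k‖₊ : ℝ≥0∞))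
    (by norm_num : (1:ℝ) ≤ 2)
  simp only [e2] at h
  refine le_trans ?_ h
  rw [n2]
  refine ENNReal.rpow_le_rpow ?_ (by norm_num)
  refine ENNReal.tsum_le_tsum fun k => ?_
  refine pow_le_pow_left' ?_ 2
  calc ((‖f k + g k‖₊ : ℝ≥0∞)) ≤ ((‖f k‖₊ + ‖g k‖₊ : NNReal) : ℝ≥0∞) := by
        exact_mod_cast nnnorm_add_le _ _
    _ = (‖f k‖₊ : ℝ≥0∞) + ‖g k‖₊ := by push_cast; ring

lemma n4_add_le {ι : Type*} (f g : ι → ℂ) :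
    n4 (fun k => f k + g k) ≤ n4 f + n4 g := by
  have e4 : ∀ x : ℝ≥0∞, x ^ (4:ℝ) = x ^ (4:ℕ) := by
    intro x; rw [← ENNReal.rpow_natCast x 4]; norm_num
  have h := enn_minkowski (fun k => (‖f k‖₊ : ℝ≥0∞)) (fun k => (‖g k‖₊ : ℝ≥0∞))
    (by norm_num : (1:ℝ) ≤ 4)
  simp only [e4] at h
  refine le_trans ?_ h
  rw [n4]
  refine ENNReal.rpow_le_rpow ?_ (by norm_num)
  refine ENNReal.tsum_le_tsum fun k => ?_
  refine pow_le_pow_left' ?_ 4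
  calc ((‖f k + g k‖₊ : ℝ≥0∞)) ≤ ((‖f k‖₊ + ‖g k‖₊ : NNReal) : ℝ≥0∞) := by
        exact_mod_cast nnnorm_add_le _ _
    _ = (‖f k‖₊ : ℝ≥0∞) + ‖g k‖₊ := by push_cast; ring

lemma n2_zero {ι : Type*} : n2 (fun _ : ι => (0:ℂ)) = 0 := by
  simp [n2, eS, ENNReal.zero_rpow_of_pos]

lemma n2_congr {ι : Type*} {f g : ι → ℂ} (h : ∀ k, f k = g k) : n2 f = n2 g := by
  congr 1; funext k; exact h k

lemma n2_sum_le {ι : Type*} {n : ℕ} (F : Fin n → ι → ℂ) (s : Finset (Fin n)) :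
    n2 (fun k => ∑ t ∈ s, F t k) ≤ ∑ t ∈ s, n2 (F t) := by
  induction s using Finset.cons_induction with
  | empty => simp [n2_zero]
  | cons t s hts ih =>
      rw [Finset.sum_cons]
      refine le_trans ?_ (add_le_add le_rfl ih)
      refine le_trans (le_of_eq (n2_congr fun k => ?_)) (n2_add_le (F t) (fun k => ∑ u ∈ s, F u k))
      rw [Finset.sum_cons]

lemma n4_sub_comm {ι : Type*} (f g : ι → ℂ) :
    n4 (fun k => f k - g k) = n4 (fun k => g k - f k) := by
  unfold n4 eS; congr 1; exact tsum_congr fun k => by simp only []; rw [← neg_sub (g k) (f k), nnnorm_neg]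

lemma n2_sub_comm {ι : Type*} (f g : ι → ℂ) :
    n2 (fun k => f k - g k) = n2 (fun k => g k - f k) := by
  unfold n2 eS; congr 1; exact tsum_congr fun k => by simp only []; rw [← neg_sub (g k) (f k), nnnorm_neg]

-- summability of differences
lemma sub_sq_summable {ι : Type*} {f g : ι → ℂ} (hf : Summable fun k => ‖f k‖ ^ 2)
    (hg : Summable fun k => ‖g k‖ ^ 2) : Summable fun k => ‖f k - g k‖ ^ 2 := by
  refine Summable.of_nonneg_of_le (fun k => by positivity) (fun k => ?_)
    (((hf.mul_left 2).add (hg.mul_left 2)))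
  have h1 := norm_sub_le (f k) (g k)
  nlinarith [norm_nonneg (f k), norm_nonneg (g k), norm_nonneg (f k - g k),
    sq_nonneg (‖f k‖ - ‖g k‖)]

lemma sub_quad_summable {ι : Type*} {f g : ι → ℂ} (hf : Summable fun k => ‖f k‖ ^ 4)
    (hg : Summable fun k => ‖g k‖ ^ 4) : Summable fun k => ‖f k - g k‖ ^ 4 := by
  refine Summable.of_nonneg_of_le (fun k => by positivity) (fun k => ?_)
    (((hf.mul_left 8).add (hg.mul_left 8)))
  have h1 := norm_sub_le (f k) (g k)
  have h2 : ‖f k - g k‖ ^ 4 ≤ (‖f k‖ + ‖g k‖) ^ 4 :=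
    pow_le_pow_left₀ (norm_nonneg _) h1 4
  refine h2.trans ?_
  nlinarith [sq_nonneg (‖f k‖ - ‖g k‖), sq_nonneg (‖f k‖ + ‖g k‖), norm_nonneg (f k),
    norm_nonneg (g k), sq_nonneg (‖f k‖ ^ 2 - ‖g k‖ ^ 2), sq_nonneg (‖f k‖ * ‖g k‖)]



lemma l2Norm_eq' (f : (Fin d → ℤ) → ℂ) : l2Norm f = (n2 f).toReal := l2Norm_eq f
lemma l4Norm_eq' (f : (Fin d → ℤ) → ℂ) : l4Norm f = (n4 f).toReal := l4Norm_eq f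

lemma l2Norm_nonneg (f : (Fin d → ℤ) → ℂ) : 0 ≤ l2Norm f := Real.sqrt_nonneg _
lemma l4Norm_nonneg (f : (Fin d → ℤ) → ℂ) : 0 ≤ l4Norm f := by
  rw [l4Norm_eq']; exact ENNReal.toReal_nonneg

lemma n2_eq_ofReal {f : (Fin d → ℤ) → ℂ} (h : Summable fun k => ‖f k‖ ^ 2) :
    n2 f = ENNReal.ofReal (l2Norm f) := by
  rw [l2Norm_eq', ENNReal.ofReal_toReal (n2_ne_top h)]

lemma n4_eq_ofReal {f : (Fin d → ℤ) → ℂ} (h : Summable fun k => ‖f k‖ ^ 4) :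
    n4 f = ENNReal.ofReal (l4Norm f) := by
  rw [l4Norm_eq', ENNReal.ofReal_toReal (n4_ne_top h)]

-- pointwise bound by l2 norm
lemma pt_le_l2 {f : (Fin d → ℤ) → ℂ} (h : Summable fun k => ‖f k‖ ^ 2) (m : Fin d → ℤ) :
    ‖f m‖ ≤ l2Norm f := by
  rw [l2Norm]
  have h1 : ‖f m‖ ^ 2 ≤ ∑' k, ‖f k‖ ^ 2 := Summable.le_tsum h m fun _ _ => by positivity
  calc ‖f m‖ = Real.sqrt (‖f m‖ ^ 2) := (Real.sqrt_sq (norm_nonneg _)).symm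
    _ ≤ _ := Real.sqrt_le_sqrt h1

lemma conv_summable {α β a : (Fin d → ℤ) → ℂ} (hα : Summable fun k => ‖α k‖ ^ 2)
    (hβ : Summable fun k => ‖β k‖ ^ 2) (ha : Summable fun k => ‖a k‖ ^ 2) (k : Fin d → ℤ) :
    Summable fun l => (α l * a l) * (β (k - l) * a (k - l)) := by
  refine Summable.of_norm ?_
  have hg : Summable fun l => ‖α l‖ * ‖a l‖ := by
    refine Summable.of_nonneg_of_le (fun l => by positivity) (fun l => ?_)
      (((hα.add ha).div_const 2))
    have := sq_nonneg (‖α l‖ - ‖a l‖)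
    nlinarith
  refine Summable.of_nonneg_of_le (fun l => by positivity) (fun l => ?_)
    (hg.mul_right (l2Norm β * l2Norm a))
  have e : ‖α l * a l * (β (k - l) * a (k - l))‖ = (‖α l‖ * ‖a l‖) * (‖β (k - l)‖ * ‖a (k - l)‖) := by
    rw [norm_mul, norm_mul, norm_mul]
  rw [e]
  refine mul_le_mul_of_nonneg_left ?_ (by positivity)
  exact mul_le_mul (pt_le_l2 hβ _) (pt_le_l2 ha _) (norm_nonneg _) (l2Norm_nonneg β)

lemma conv_split {α α' β β' a : (Fin d → ℤ) → ℂ}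
    (hα : Summable fun k => ‖α k‖ ^ 2) (hα' : Summable fun k => ‖α' k‖ ^ 2)
    (hβ : Summable fun k => ‖β k‖ ^ 2) (hβ' : Summable fun k => ‖β' k‖ ^ 2)
    (ha : Summable fun k => ‖a k‖ ^ 2) (k : Fin d → ℤ) :
    zConv (fun n => α n * a n) (fun n => β n * a n) k
      - zConv (fun n => α' n * a n) (fun n => β' n * a n) k
    = zConv (fun n => (α n - α' n) * a n) (fun n => β n * a n) k
      + zConv (fun n => α' n * a n) (fun n => (β n - β' n) * a n) k := by
  have S1 := conv_summable hα hβ ha k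
  have S2 := conv_summable hα' hβ' ha k
  have SX : Summable fun l => ((α l - α' l) * a l) * (β (k - l) * a (k - l)) :=
    conv_summable (sub_sq_summable hα hα') hβ ha k
  have SY : Summable fun l => (α' l * a l) * ((β (k - l) - β' (k - l)) * a (k - l)) := by
    have := conv_summable (α := fun n => α' n) (β := fun n => β n - β' n)
      hα' (sub_sq_summable hβ hβ') ha k
    simpa using this
  have h1 : zConv (fun n => α n * a n) (fun n => β n * a n) k
      - zConv (fun n => α' n * a n) (fun n => β' n * a n) k
      = ∑' l, ((α l * a l) * (β (k - l) * a (k - l)) - (α' l * a l) * (β' (k - l) * a (k - l))) := by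
    rw [zConv, zConv, ← Summable.tsum_sub S1 S2]
  have h2 : zConv (fun n => (α n - α' n) * a n) (fun n => β n * a n) k
      + zConv (fun n => α' n * a n) (fun n => (β n - β' n) * a n) k
      = ∑' l, (((α l - α' l) * a l) * (β (k - l) * a (k - l))
          + (α' l * a l) * ((β (k - l) - β' (k - l)) * a (k - l))) := by
    rw [zConv, zConv, ← Summable.tsum_add SX SY]
  rw [h1, h2]
  exact tsum_congr fun l => by ring

lemma l2_triangle' {f g : (Fin d → ℤ) → ℂ}
    (hf : Summable fun k => ‖f k‖ ^ 2) (hg : Summable fun k => ‖g k‖ ^ 2) :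
    l2Norm g ≤ l2Norm f + l2Norm (fun k => f k - g k) := by
  have h1 : n2 g ≤ n2 f + n2 (fun k => f k - g k) := by
    have h2 : n2 g = n2 (fun k => f k + (g k - f k)) := n2_congr fun k => by ring
    rw [h2]
    refine (n2_add_le f (fun k => g k - f k)).trans ?_
    rw [n2_sub_comm]
  have hfin : n2 f + n2 (fun k => f k - g k) ≠ ⊤ :=
    ENNReal.add_ne_top.2 ⟨n2_ne_top hf, n2_ne_top (sub_sq_summable hf hg)⟩
  have := ENNReal.toReal_mono hfin h1
  rw [ENNReal.toReal_add (n2_ne_top hf) (n2_ne_top (sub_sq_summable hf hg))] at this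
  rw [l2Norm_eq', l2Norm_eq', l2Norm_eq']
  exact this

lemma l4_triangle' {f g : (Fin d → ℤ) → ℂ}
    (hf : Summable fun k => ‖f k‖ ^ 4) (hg : Summable fun k => ‖g k‖ ^ 4) :
    l4Norm g ≤ l4Norm f + l4Norm (fun k => f k - g k) := by
  have h1 : n4 g ≤ n4 f + n4 (fun k => f k - g k) := by
    have h2 : n4 g = n4 (fun k => f k + (g k - f k)) := by
      unfold n4 eS; congr 1; exact tsum_congr fun k => by ring_nf
    rw [h2]
    refine (n4_add_le f (fun k => g k - f k)).trans ?_
    rw [n4_sub_comm]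
  have hfin : n4 f + n4 (fun k => f k - g k) ≠ ⊤ :=
    ENNReal.add_ne_top.2 ⟨n4_ne_top hf, n4_ne_top (sub_quad_summable hf hg)⟩
  have := ENNReal.toReal_mono hfin h1
  rw [ENNReal.toReal_add (n4_ne_top hf) (n4_ne_top (sub_quad_summable hf hg))] at this
  rw [l4Norm_eq', l4Norm_eq', l4Norm_eq']
  exact this


end Aux7

/-- (Lemma 3.3 of the paper, sequence form.) With
`A_t := ‖γ_t‖_{ℓ⁴}(1 + ‖α_t‖_{ℓ²} + ‖β_t‖_{ℓ²})`,
`B_t := (1 + ‖α_t‖_{ℓ²})(1 + ‖β_t‖_{ℓ²})(1 + ‖γ_t‖_{ℓ⁴})` and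
`c := max_{1 ≤ t ≤ M} (A_t + B_t)`, if all perturbed parameters are `δ`-close
(`δ ∈ (0,1)`), then
`‖Σ_t [γ_t·((α_t·a)*(β_t·a)) − γ'_t·((α'_t·a)*(β'_t·a))]‖_{ℓ²} ≤ M δ c ‖a‖_{ℓ²}²`. -/
theorem statement7 (d M : ℕ) (hd : 1 ≤ d) (hM : 0 < M)
    (δ : ℝ) (hδ0 : 0 < δ) (hδ1 : δ < 1)
    (α α' β β' γ γ' : Fin M → (Fin d → ℤ) → ℂ) (a : (Fin d → ℤ) → ℂ)
    (hα : ∀ t, Summable fun k => ‖α t k‖ ^ 2)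
    (hα' : ∀ t, Summable fun k => ‖α' t k‖ ^ 2)
    (hβ : ∀ t, Summable fun k => ‖β t k‖ ^ 2)
    (hβ' : ∀ t, Summable fun k => ‖β' t k‖ ^ 2)
    (ha : Summable fun k => ‖a k‖ ^ 2)
    (hγ : ∀ t, Summable fun k => ‖γ t k‖ ^ 4)
    (hγ' : ∀ t, Summable fun k => ‖γ' t k‖ ^ 4)
    (hαδ : ∀ t, l2Norm (fun n => α t n - α' t n) < δ)
    (hβδ : ∀ t, l2Norm (fun n => β t n - β' t n) < δ)
    (hγδ : ∀ t, l4Norm (fun n => γ t n - γ' t n) < δ)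
    (c : ℝ)
    (hc : c = ⨆ t : Fin M,
      (l4Norm (γ t) * (1 + l2Norm (α t) + l2Norm (β t))
        + (1 + l2Norm (α t)) * (1 + l2Norm (β t)) * (1 + l4Norm (γ t)))) :
    l2Norm (fun k => ∑ t : Fin M,
        (γ t k * zConv (fun n => α t n * a n) (fun n => β t n * a n) k
          - γ' t k * zConv (fun n => α' t n * a n) (fun n => β' t n * a n) k))
      ≤ M * δ * c * (l2Norm a) ^ 2 := by
  have hABc : ∀ t : Fin M,
      l4Norm (γ t) * (1 + l2Norm (α t) + l2Norm (β t))
        + (1 + l2Norm (α t)) * (1 + l2Norm (β t)) * (1 + l4Norm (γ t)) ≤ c := by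
    intro t; rw [hc]
    exact le_ciSup (f := fun t : Fin M =>
      l4Norm (γ t) * (1 + l2Norm (α t) + l2Norm (β t))
        + (1 + l2Norm (α t)) * (1 + l2Norm (β t)) * (1 + l4Norm (γ t)))
      (Finite.bddAbove_range _) t
  have hc0 : 0 ≤ c := by
    have t0 : Fin M := ⟨0, hM⟩
    refine le_trans ?_ (hABc t0)
    have h1 := l4Norm_nonneg (γ t0); have h2 := l2Norm_nonneg (α t0)
    have h3 := l2Norm_nonneg (β t0)
    have e1 : (0:ℝ) ≤ l4Norm (γ t0) * (1 + l2Norm (α t0) + l2Norm (β t0)) :=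
      mul_nonneg h1 (by linarith)
    have e2 : (0:ℝ) ≤ (1 + l2Norm (α t0)) * (1 + l2Norm (β t0)) * (1 + l4Norm (γ t0)) :=
      mul_nonneg (mul_nonneg (by linarith) (by linarith)) (by linarith)
    linarith
  -- per-t bound
  have key_t : ∀ t : Fin M,
      n2 (fun k => γ t k * zConv (fun n => α t n * a n) (fun n => β t n * a n) k
          - γ' t k * zConv (fun n => α' t n * a n) (fun n => β' t n * a n) k)
        ≤ ENNReal.ofReal (δ * c * (l2Norm a) ^ 2) := by
    intro t
    -- split
    have hsplit : (fun k => γ t k * zConv (fun n => α t n * a n) (fun n => β t n * a n) k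
          - γ' t k * zConv (fun n => α' t n * a n) (fun n => β' t n * a n) k)
        = fun k => ((γ t k - γ' t k) * zConv (fun n => α t n * a n) (fun n => β t n * a n) k)
            + ((γ' t k * zConv (fun n => (α t n - α' t n) * a n) (fun n => β t n * a n) k)
              + (γ' t k * zConv (fun n => α' t n * a n) (fun n => (β t n - β' t n) * a n) k)) := by
      funext k
      have hw := conv_split (hα t) (hα' t) (hβ t) (hβ' t) ha k
      linear_combination (γ' t k) * hw
    rw [hsplit]
    refine le_trans (n2_add_le _ _) ?_
    refine le_trans (add_le_add le_rfl (n2_add_le _ _)) ?_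
    -- three pieces via key3
    have hp1 : n2 (fun k => (γ t k - γ' t k)
          * zConv (fun n => α t n * a n) (fun n => β t n * a n) k)
        ≤ n4 (fun n => γ t n - γ' t n) * (n2 (α t) * (n2 (β t) * (n2 a) ^ 2)) := by
      refine le_trans (le_of_eq (n2_congr fun k => rfl)) (key3 (fun n => γ t n - γ' t n) (α t) (β t) a)
    have hp2 := key3 (γ' t) (fun n => α t n - α' t n) (β t) a
    have hp3 := key3 (γ' t) (α' t) (fun n => β t n - β' t n) a
    -- convert to ofReal
    have hγγ' : Summable fun k => ‖γ t k - γ' t k‖ ^ 4 := sub_quad_summable (hγ t) (hγ' t)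
    have hαα' : Summable fun k => ‖α t k - α' t k‖ ^ 2 := sub_sq_summable (hα t) (hα' t)
    have hββ' : Summable fun k => ‖β t k - β' t k‖ ^ 2 := sub_sq_summable (hβ t) (hβ' t)
    set pα := l2Norm (α t); set pβ := l2Norm (β t); set pγ := l4Norm (γ t)
    set qα := l2Norm (α' t); set qγ := l4Norm (γ' t); set la := l2Norm a
    set dα := l2Norm (fun n => α t n - α' t n)
    set dβ := l2Norm (fun n => β t n - β' t n)
    set dγ := l4Norm (fun n => γ t n - γ' t n)
    have hb1 : n4 (fun n => γ t n - γ' t n) * (n2 (α t) * (n2 (β t) * (n2 a) ^ 2))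
        = ENNReal.ofReal (dγ * (pα * (pβ * la ^ 2))) := by
      rw [n4_eq_ofReal hγγ', n2_eq_ofReal (hα t), n2_eq_ofReal (hβ t), n2_eq_ofReal ha,
        ← ENNReal.ofReal_pow (l2Norm_nonneg a),
        ← ENNReal.ofReal_mul (l2Norm_nonneg (β t)),
        ← ENNReal.ofReal_mul (l2Norm_nonneg (α t)),
        ← ENNReal.ofReal_mul (l4Norm_nonneg _)]
    have hb2 : n4 (γ' t) * (n2 (fun n => α t n - α' t n) * (n2 (β t) * (n2 a) ^ 2))
        = ENNReal.ofReal (qγ * (dα * (pβ * la ^ 2))) := by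
      rw [n4_eq_ofReal (hγ' t), n2_eq_ofReal hαα', n2_eq_ofReal (hβ t), n2_eq_ofReal ha,
        ← ENNReal.ofReal_pow (l2Norm_nonneg a),
        ← ENNReal.ofReal_mul (l2Norm_nonneg (β t)),
        ← ENNReal.ofReal_mul (l2Norm_nonneg _),
        ← ENNReal.ofReal_mul (l4Norm_nonneg _)]
    have hb3 : n4 (γ' t) * (n2 (α' t) * (n2 (fun n => β t n - β' t n) * (n2 a) ^ 2))
        = ENNReal.ofReal (qγ * (qα * (dβ * la ^ 2))) := by
      rw [n4_eq_ofReal (hγ' t), n2_eq_ofReal (hα' t), n2_eq_ofReal hββ', n2_eq_ofReal ha,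
        ← ENNReal.ofReal_pow (l2Norm_nonneg a),
        ← ENNReal.ofReal_mul (l2Norm_nonneg _),
        ← ENNReal.ofReal_mul (l2Norm_nonneg (α' t)),
        ← ENNReal.ofReal_mul (l4Norm_nonneg _)]
    have h0a := l2Norm_nonneg a
    have h0pα : (0:ℝ) ≤ pα := l2Norm_nonneg _
    have h0pβ : (0:ℝ) ≤ pβ := l2Norm_nonneg _
    have h0pγ : (0:ℝ) ≤ pγ := l4Norm_nonneg _
    have h0qα : (0:ℝ) ≤ qα := l2Norm_nonneg _
    have h0qγ : (0:ℝ) ≤ qγ := l4Norm_nonneg _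
    have h0dα : (0:ℝ) ≤ dα := l2Norm_nonneg _
    have h0dβ : (0:ℝ) ≤ dβ := l2Norm_nonneg _
    have h0dγ : (0:ℝ) ≤ dγ := l4Norm_nonneg _
    have hla2' : (0:ℝ) ≤ la ^ 2 := by positivity
    have w1 : (0:ℝ) ≤ dγ * (pα * (pβ * la ^ 2)) :=
      mul_nonneg h0dγ (mul_nonneg h0pα (mul_nonneg h0pβ hla2'))
    have w2 : (0:ℝ) ≤ qγ * (dα * (pβ * la ^ 2)) :=
      mul_nonneg h0qγ (mul_nonneg h0dα (mul_nonneg h0pβ hla2'))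
    have w3 : (0:ℝ) ≤ qγ * (qα * (dβ * la ^ 2)) :=
      mul_nonneg h0qγ (mul_nonneg h0qα (mul_nonneg h0dβ hla2'))
    refine le_trans (add_le_add (hp1.trans_eq hb1)
      (add_le_add (hp2.trans_eq hb2) (hp3.trans_eq hb3))) ?_
    rw [← ENNReal.ofReal_add w2 w3, ← ENNReal.ofReal_add w1 (by linarith)]
    refine ENNReal.ofReal_le_ofReal ?_
    -- real arithmetic
    have hdα : dα ≤ δ := (hαδ t).le
    have hdβ : dβ ≤ δ := (hβδ t).le
    have hdγ : dγ ≤ δ := (hγδ t).le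
    have hqγ : qγ ≤ pγ + 1 := by
      have := l4_triangle' (hγ t) (hγ' t)
      have := (hγδ t).le
      have : qγ ≤ pγ + dγ := by
        simpa using l4_triangle' (hγ t) (hγ' t)
      linarith
    have hqα : qα ≤ pα + 1 := by
      have : qα ≤ pα + dα := by
        simpa using l2_triangle' (hα t) (hα' t)
      linarith
    have hla2 : (0:ℝ) ≤ la ^ 2 := by positivity
    have hAB := hABc t
    -- E := pα*pβ + (pγ+1)*pβ + (pγ+1)*(pα+1)
    have hE : dγ * (pα * (pβ * la ^ 2)) + (qγ * (dα * (pβ * la ^ 2)) + qγ * (qα * (dβ * la ^ 2)))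
        ≤ δ * ((pα * pβ + (pγ + 1) * pβ + (pγ + 1) * (pα + 1)) * la ^ 2) := by
      have t1 : dγ * (pα * (pβ * la ^ 2)) ≤ δ * (pα * (pβ * la ^ 2)) :=
        mul_le_mul_of_nonneg_right hdγ (by positivity)
      have t2 : qγ * (dα * (pβ * la ^ 2)) ≤ (pγ + 1) * (δ * (pβ * la ^ 2)) :=
        mul_le_mul hqγ (mul_le_mul_of_nonneg_right hdα (by positivity)) (by positivity) (by linarith)
      have t3 : qγ * (qα * (dβ * la ^ 2)) ≤ (pγ + 1) * ((pα + 1) * (δ * la ^ 2)) := by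
        refine mul_le_mul hqγ ?_ (by positivity) (by linarith)
        exact mul_le_mul hqα (mul_le_mul_of_nonneg_right hdβ (by positivity)) (by positivity) (by linarith)
      nlinarith [t1, t2, t3]
    refine hE.trans ?_
    have hEc : pα * pβ + (pγ + 1) * pβ + (pγ + 1) * (pα + 1) ≤ c := by
      refine le_trans ?_ hAB
      nlinarith [mul_nonneg (mul_nonneg (by linarith : (0:ℝ) ≤ 1 + pα) (by linarith : (0:ℝ) ≤ 1 + pβ)) h0pγ]
    calc δ * ((pα * pβ + (pγ + 1) * pβ + (pγ + 1) * (pα + 1)) * la ^ 2)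
        ≤ δ * (c * la ^ 2) := by
          refine mul_le_mul_of_nonneg_left (mul_le_mul_of_nonneg_right hEc hla2) hδ0.le
      _ = δ * c * la ^ 2 := by ring
  -- sum over t
  have hsum : n2 (fun k => ∑ t : Fin M,
        (γ t k * zConv (fun n => α t n * a n) (fun n => β t n * a n) k
          - γ' t k * zConv (fun n => α' t n * a n) (fun n => β' t n * a n) k))
      ≤ ENNReal.ofReal ((M : ℝ) * (δ * c * (l2Norm a) ^ 2)) := by
    refine le_trans (n2_sum_le _ Finset.univ) ?_
    refine le_trans (Finset.sum_le_sum fun t _ => key_t t) ?_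
    rw [Finset.sum_const, Finset.card_univ, Fintype.card_fin, nsmul_eq_mul,
      ← ENNReal.ofReal_natCast M, ← ENNReal.ofReal_mul (by positivity)]
  have hfinal : 0 ≤ (M:ℝ) * δ * c * (l2Norm a) ^ 2 := by positivity
  rw [l2Norm_eq']
  refine ENNReal.toReal_le_of_le_ofReal hfinal ?_
  refine hsum.trans (le_of_eq ?_)
  congr 1
  ring
end
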